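/- arXiv:2509.09589 — 2 statements merged into one kernel-verified Lean document; each statement's English description precedes it below -/
import Mathlib

section
/- There exists a constant C > 0 depending only on d and L such that for every ε ∈ (0,1), the largest connected component C_1^{(n)}(−ε) of the random graph with edge probabilities 1 − exp(−(1−ε)·ζ_n^{−1}·J(x,y)) satisfies P( |C_1^{(n)}(−ε)| ≤ C·n·ε^{−2} ) → 1 as n → ∞. -/
open MeasureTheory ProbabilityTheory Filter Finset
open scoped ENNReal Classical

noncomputable section

/-- The hierarchical lattice `H^d_L`: the direct sum of countably many copies of `(ZMod L)^d`. -/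
abbrev HLat (d L : ℕ) : Type := ℕ →₀ (Fin d → ZMod L)

/-- `hnorm x = 0` if `x = 0`, and `hnorm x = L^(i+1)` if `x i ≠ 0` and `x j = 0` for `j > i`
(coordinates indexed from `0`, matching the paper's indexing from `1`). -/
def hnorm {d L : ℕ} (x : HLat d L) : ℕ :=
  x.support.sup fun i => L ^ (i + 1)

/-- The ball `Λ_n = {x : ‖x‖ ≤ L^n}`. -/
def Lambda (d L n : ℕ) : Set (HLat d L) := {x | hnorm x ≤ L ^ n}

/-- The defining equation for `ζ_n`:
`(L^d - 1) · ∑_{i=1}^n L^((i-1)d) exp(-z⁻¹ ρ(L^i)) = L^(nd) - 2`. -/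
def zetaEq (d L : ℕ) (ρ : ℝ → ℝ) (n : ℕ) (z : ℝ) : Prop :=
  ((L : ℝ) ^ d - 1) *
      ∑ i ∈ Finset.Icc 1 n, (L : ℝ) ^ ((i - 1) * d) * Real.exp (-z⁻¹ * ρ ((L : ℝ) ^ i))
    = (L : ℝ) ^ (n * d) - 2

/-- The percolation graph on the vertex set `Λ` determined by the boolean edge configuration `e`:
distinct `x, y ∈ Λ` are adjacent iff the edge indicator of the (unordered) pair is `true`. -/
def graphOf {V : Type*} (Λ : Set V) (e : Sym2 V → Bool) : SimpleGraph V where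
  Adj x y := x ≠ y ∧ x ∈ Λ ∧ y ∈ Λ ∧ e s(x, y) = true
  symm := by
    constructor
    rintro x y ⟨h1, h2, h3, h4⟩
    refine ⟨h1.symm, h3, h2, ?_⟩
    rwa [Sym2.eq_swap]
  loopless := by constructor; rintro x ⟨h, -⟩; exact h rfl

/-- The number of vertices in the connected component of `x`. -/
def compSize {V : Type*} (G : SimpleGraph V) (x : V) : ℕ := Set.ncard {y | G.Reachable x y}

namespace PSub


variable {V : Type*} [DecidableEq V]

/-- The edge relation of the percolation graph on vertex set `S` with open edge set `T`. -/
def R (S : Finset V) (T : Finset (Sym2 V)) (u v : V) : Prop :=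
  u ≠ v ∧ u ∈ S ∧ v ∈ S ∧ s(u, v) ∈ T

lemma R.symm' {S : Finset V} {T : Finset (Sym2 V)} {u v : V} (h : R S T u v) : R S T v u := by
  obtain ⟨h1, h2, h3, h4⟩ := h
  exact ⟨h1.symm, h3, h2, by rwa [Sym2.eq_swap]⟩

/-- Reachability. -/
def reach (S : Finset V) (T : Finset (Sym2 V)) : V → V → Prop :=
  Relation.ReflTransGen (R S T)

lemma reach_mem {S : Finset V} {T : Finset (Sym2 V)} {u v : V}
    (h : reach S T u v) (hu : u ∈ S) : v ∈ S := by
  induction h with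
  | refl => exact hu
  | tail _ h2 _ => exact h2.2.2.1

lemma reach_mono {S S' : Finset V} {T T' : Finset (Sym2 V)} (hS : S ⊆ S') (hT : T ⊆ T')
    {u v : V} (h : reach S T u v) : reach S' T' u v :=
  Relation.ReflTransGen.mono (fun a b (hab : R S T a b) => (⟨hab.1, hS hab.2.1, hS hab.2.2.1, hT hab.2.2.2⟩ : R S' T' a b)) u v h

lemma reach_congr {S : Finset V} {T T' : Finset (Sym2 V)}
    (h : ∀ u v : V, u ∈ S → v ∈ S → u ≠ v → (s(u, v) ∈ T ↔ s(u, v) ∈ T'))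
    {u v : V} : reach S T u v ↔ reach S T' u v :=
  ⟨Relation.ReflTransGen.mono
      (fun a b (hab : R S T a b) => (⟨hab.1, hab.2.1, hab.2.2.1, (h a b hab.2.1 hab.2.2.1 hab.1).1 hab.2.2.2⟩ : R S T' a b)) u v,
   Relation.ReflTransGen.mono
      (fun a b (hab : R S T' a b) => (⟨hab.1, hab.2.1, hab.2.2.1, (h a b hab.2.1 hab.2.2.1 hab.1).2 hab.2.2.2⟩ : R S T a b)) u v⟩

/-- The union of the clusters of the vertices of `A` in the percolation graph on `S`. -/
def clus (S : Finset V) (T : Finset (Sym2 V)) (A : Finset V) : Finset V :=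
  S.filter (fun v => ∃ a ∈ A, reach S T a v)

lemma mem_clus {S : Finset V} {T : Finset (Sym2 V)} {A : Finset V} {v : V} :
    v ∈ clus S T A ↔ v ∈ S ∧ ∃ a ∈ A, reach S T a v := Finset.mem_filter

lemma clus_subset (S : Finset V) (T : Finset (Sym2 V)) (A : Finset V) : clus S T A ⊆ S :=
  Finset.filter_subset _ _

lemma clus_empty (S : Finset V) (T : Finset (Sym2 V)) : clus S T (∅ : Finset V) = ∅ := by
  ext v; simp [mem_clus]

lemma mem_clus_self {S : Finset V} {T : Finset (Sym2 V)} {a : V} (ha : a ∈ S)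
    {A : Finset V} (haA : a ∈ A) : a ∈ clus S T A :=
  mem_clus.2 ⟨ha, a, haA, Relation.ReflTransGen.refl⟩

lemma clus_congr {S : Finset V} {T T' : Finset (Sym2 V)}
    (h : ∀ u v : V, u ∈ S → v ∈ S → u ≠ v → (s(u, v) ∈ T ↔ s(u, v) ∈ T'))
    (A : Finset V) : clus S T A = clus S T' A := by
  ext v
  simp only [mem_clus]
  constructor <;> rintro ⟨hv, a, ha, hr⟩
  · exact ⟨hv, a, ha, (reach_congr h).1 hr⟩
  · exact ⟨hv, a, ha, (reach_congr h).2 hr⟩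


lemma mem_clus_singleton {S : Finset V} {T : Finset (Sym2 V)} {x v : V} :
    v ∈ clus S T {x} ↔ v ∈ S ∧ reach S T x v := by
  simp [mem_clus]

/-- Decomposition of a one-point cluster: remove the root. -/
lemma clus_point_decomp {S : Finset V} {T : Finset (Sym2 V)} {x : V} (hx : x ∈ S) :
    clus S T {x} =
      insert x (clus (S.erase x) T ((S.erase x).filter (fun y => s(x, y) ∈ T))) := by
  set N := (S.erase x).filter (fun y => s(x, y) ∈ T) with hN
  apply Finset.Subset.antisymm
  · intro v hv
    rw [mem_clus_singleton] at hv
    obtain ⟨hvS, hr⟩ := hv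
    clear hvS
    have key : v = x ∨ v ∈ clus (S.erase x) T N := by
      induction hr with
      | refl => exact Or.inl rfl
      | @tail b c hab hbc ih =>
        rcases ih with rfl | hb
        · right
          have hcN : c ∈ N := by
            rw [hN, Finset.mem_filter]
            exact ⟨Finset.mem_erase.2 ⟨hbc.1.symm, hbc.2.2.1⟩, hbc.2.2.2⟩
          exact mem_clus_self (Finset.mem_erase.2 ⟨hbc.1.symm, hbc.2.2.1⟩) hcN
        · by_cases hcx : c = x
          · exact Or.inl hcx
          · right
            rw [mem_clus] at hb ⊢
            obtain ⟨hbS, y, hyN, hr'⟩ := hb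
            have hcE : c ∈ S.erase x := Finset.mem_erase.2 ⟨hcx, hbc.2.2.1⟩
            exact ⟨hcE, y, hyN, hr'.tail ⟨hbc.1, hbS, hcE, hbc.2.2.2⟩⟩
    rcases key with rfl | h
    · exact Finset.mem_insert_self _ _
    · exact Finset.mem_insert_of_mem h
  · intro v hv
    rcases Finset.mem_insert.1 hv with rfl | hv
    · exact mem_clus_self hx (Finset.mem_singleton_self v)
    · rw [mem_clus] at hv
      rw [mem_clus_singleton]
      obtain ⟨hvS, y, hyN, hr⟩ := hv
      refine ⟨Finset.mem_of_mem_erase hvS, ?_⟩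
      rw [hN, Finset.mem_filter] at hyN
      have h1 : reach S T x y := Relation.ReflTransGen.single
        ⟨(Finset.ne_of_mem_erase hyN.1).symm, hx, Finset.mem_of_mem_erase hyN.1, hyN.2⟩
      exact h1.trans (reach_mono (Finset.erase_subset x S) (subset_refl T) hr)

lemma card_clus_point {S : Finset V} {T : Finset (Sym2 V)} {x : V} (hx : x ∈ S) :
    (clus S T {x}).card
      = 1 + (clus (S.erase x) T ((S.erase x).filter (fun y => s(x, y) ∈ T))).card := by
  rw [clus_point_decomp hx, Finset.card_insert_of_notMem, add_comm]
  intro hmem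
  exact (Finset.notMem_erase x S) (clus_subset _ _ _ hmem)

/-- A one-point cluster only depends on the edges touching it. -/
lemma clus_point_congr {S K : Finset V} {T T' : Finset (Sym2 V)} {a : V} (haS : a ∈ S)
    (hK : clus S T {a} = K)
    (hE : ∀ u v : V, u ∈ K → v ∈ S → u ≠ v → (s(u, v) ∈ T ↔ s(u, v) ∈ T')) :
    clus S T' {a} = K := by
  have haK : a ∈ K := by rw [← hK]; exact mem_clus_self haS (Finset.mem_singleton_self a)
  have hKS : K ⊆ S := by rw [← hK]; exact clus_subset _ _ _
  apply Finset.Subset.antisymm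
  · intro v hv
    rw [mem_clus_singleton] at hv
    obtain ⟨hvS, hr⟩ := hv
    clear hvS
    induction hr with
    | refl => exact haK
    | @tail b c hab hbc ih =>
      have hT : s(b, c) ∈ T := (hE _ _ ih hbc.2.2.1 hbc.1).2 hbc.2.2.2
      have hb' : b ∈ clus S T {a} := by rw [hK]; exact ih
      rw [mem_clus_singleton] at hb'
      have : c ∈ clus S T {a} :=
        mem_clus_singleton.2 ⟨hbc.2.2.1, hb'.2.tail ⟨hbc.1, hb'.1, hbc.2.2.1, hT⟩⟩
      rw [hK] at this
      exact this
  · intro v hv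
    have hv' : v ∈ clus S T {a} := by rw [hK]; exact hv
    rw [mem_clus_singleton] at hv'
    obtain ⟨hvS, hr⟩ := hv'
    rw [mem_clus_singleton]
    refine ⟨hvS, ?_⟩
    clear hv hvS
    induction hr with
    | refl => exact Relation.ReflTransGen.refl
    | @tail b c hab hbc ih =>
      have hbK : b ∈ K := by
        rw [← hK]
        exact mem_clus_singleton.2 ⟨reach_mem hab haS, hab⟩
      have hT' : s(b, c) ∈ T' := (hE _ _ hbK hbc.2.2.1 hbc.1).1 hbc.2.2.2
      exact ih.tail ⟨hbc.1, hbc.2.1, hbc.2.2.1, hT'⟩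

/-- Decomposition of a multi-source cluster by peeling off the cluster of one source. -/
lemma clus_decomp {S K A : Finset V} {T : Finset (Sym2 V)} {a : V} (haA : a ∈ A) (hAS : A ⊆ S)
    (hK : clus S T {a} = K) :
    clus S T A = K ∪ clus (S \ K) T ((A.erase a) \ K) ∧
      Disjoint K (clus (S \ K) T ((A.erase a) \ K)) := by
  have haS : a ∈ S := hAS haA
  have haK : a ∈ K := by rw [← hK]; exact mem_clus_self haS (Finset.mem_singleton_self a)
  have hKS : K ⊆ S := by rw [← hK]; exact clus_subset _ _ _
  constructor
  · apply Finset.Subset.antisymm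
    · intro v hv
      rw [mem_clus] at hv
      obtain ⟨hvS, y, hyA, hr⟩ := hv
      clear hvS
      have key : v ∈ K ∨ v ∈ clus (S \ K) T ((A.erase a) \ K) := by
        induction hr with
        | refl =>
          by_cases hyK : y ∈ K
          · exact Or.inl hyK
          · right
            have hya : y ≠ a := fun h => hyK (h ▸ haK)
            exact mem_clus_self (Finset.mem_sdiff.2 ⟨hAS hyA, hyK⟩)
              (Finset.mem_sdiff.2 ⟨Finset.mem_erase.2 ⟨hya, hyA⟩, hyK⟩)
        | @tail b c hab hbc ih =>
          rcases ih with hbK | hbC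
          · left
            have hb' : b ∈ clus S T {a} := by rw [hK]; exact hbK
            rw [mem_clus_singleton] at hb'
            have : c ∈ clus S T {a} :=
              mem_clus_singleton.2 ⟨hbc.2.2.1, hb'.2.tail ⟨hbc.1, hb'.1, hbc.2.2.1, hbc.2.2.2⟩⟩
            rw [hK] at this
            exact this
          · by_cases hcK : c ∈ K
            · exact Or.inl hcK
            · right
              rw [mem_clus] at hbC ⊢
              obtain ⟨hbSK, y', hy', hr'⟩ := hbC
              have hcSK : c ∈ S \ K := Finset.mem_sdiff.2 ⟨hbc.2.2.1, hcK⟩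
              exact ⟨hcSK, y', hy', hr'.tail ⟨hbc.1, hbSK, hcSK, hbc.2.2.2⟩⟩
      rcases key with h | h
      · exact Finset.mem_union_left _ h
      · exact Finset.mem_union_right _ h
    · apply Finset.union_subset
      · intro v hv
        have hv' : v ∈ clus S T {a} := by rw [hK]; exact hv
        rw [mem_clus_singleton] at hv'
        exact mem_clus.2 ⟨hv'.1, a, haA, hv'.2⟩
      · intro v hv
        rw [mem_clus] at hv ⊢
        obtain ⟨hvSK, y, hy, hr⟩ := hv
        have hyA : y ∈ A := Finset.mem_of_mem_erase (Finset.mem_sdiff.1 hy).1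
        exact ⟨(Finset.mem_sdiff.1 hvSK).1, y, hyA,
          reach_mono Finset.sdiff_subset (subset_refl T) hr⟩
  · exact Finset.disjoint_left.2 fun v hvK hvC =>
      (Finset.mem_sdiff.1 (clus_subset _ _ _ hvC)).2 hvK

lemma card_clus_decomp {S K A : Finset V} {T : Finset (Sym2 V)} {a : V} (haA : a ∈ A)
    (hAS : A ⊆ S) (hK : clus S T {a} = K) :
    (clus S T A).card = K.card + (clus (S \ K) T ((A.erase a) \ K)).card := by
  obtain ⟨he, hd⟩ := clus_decomp haA hAS hK
  rw [he, Finset.card_union_of_disjoint hd]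

/-! ### The weighted Boolean cube -/

/-- The weight of the configuration with open-edge set `T ⊆ E`. -/
def W (p : Sym2 V → ℝ) (E T : Finset (Sym2 V)) : ℝ :=
  (∏ e ∈ T, p e) * ∏ e ∈ E \ T, (1 - p e)

/-- Expectation over the product Bernoulli measure on subsets of `E`. -/
def cube (p : Sym2 V → ℝ) (E : Finset (Sym2 V)) (f : Finset (Sym2 V) → ℝ) : ℝ :=
  ∑ T ∈ E.powerset, W p E T * f T

lemma sum_W (p : Sym2 V → ℝ) (E : Finset (Sym2 V)) : ∑ T ∈ E.powerset, W p E T = 1 := by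
  have h := Finset.prod_add p (fun e => 1 - p e) E
  simp only [add_sub_cancel] at h
  rw [show (∑ T ∈ E.powerset, W p E T)
      = ∑ T ∈ E.powerset, (∏ e ∈ T, p e) * ∏ e ∈ E \ T, (1 - p e) from rfl, ← h]
  simp

lemma cube_const (p : Sym2 V → ℝ) (E : Finset (Sym2 V)) (c : ℝ) :
    cube p E (fun _ => c) = c := by
  rw [cube, ← Finset.sum_mul, sum_W, one_mul]

lemma cube_congr (p : Sym2 V → ℝ) (E : Finset (Sym2 V)) {f g : Finset (Sym2 V) → ℝ}
    (h : ∀ T ∈ E.powerset, f T = g T) : cube p E f = cube p E g :=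
  Finset.sum_congr rfl fun T hT => by rw [h T hT]

lemma cube_sum (p : Sym2 V → ℝ) {ι : Type*} (I : Finset ι) (E : Finset (Sym2 V))
    (f : ι → Finset (Sym2 V) → ℝ) :
    cube p E (fun T => ∑ k ∈ I, f k T) = ∑ k ∈ I, cube p E (f k) := by
  unfold cube
  simp_rw [Finset.mul_sum]
  rw [Finset.sum_comm]

lemma cube_smul (p : Sym2 V → ℝ) (E : Finset (Sym2 V)) (c : ℝ) (f : Finset (Sym2 V) → ℝ) :
    cube p E (fun T => c * f T) = c * cube p E f := by
  unfold cube
  rw [Finset.mul_sum]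
  exact Finset.sum_congr rfl fun T _ => by ring

lemma cube_mul_const (p : Sym2 V → ℝ) (E : Finset (Sym2 V)) (c : ℝ) (f : Finset (Sym2 V) → ℝ) :
    cube p E (fun T => f T * c) = cube p E f * c := by
  unfold cube
  rw [Finset.sum_mul]
  exact Finset.sum_congr rfl fun T _ => by ring

lemma W_nonneg {p : Sym2 V → ℝ} (hp0 : ∀ e, 0 ≤ p e) (hp1 : ∀ e, p e ≤ 1)
    (E T : Finset (Sym2 V)) : 0 ≤ W p E T :=
  mul_nonneg (Finset.prod_nonneg fun e _ => hp0 e)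
    (Finset.prod_nonneg fun e _ => by linarith [hp1 e])

lemma cube_nonneg {p : Sym2 V → ℝ} (hp0 : ∀ e, 0 ≤ p e) (hp1 : ∀ e, p e ≤ 1)
    (E : Finset (Sym2 V)) {f : Finset (Sym2 V) → ℝ} (hf : ∀ T ∈ E.powerset, 0 ≤ f T) :
    0 ≤ cube p E f :=
  Finset.sum_nonneg fun T hT => mul_nonneg (W_nonneg hp0 hp1 E T) (hf T hT)

lemma cube_mono {p : Sym2 V → ℝ} (hp0 : ∀ e, 0 ≤ p e) (hp1 : ∀ e, p e ≤ 1)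
    (E : Finset (Sym2 V)) {f g : Finset (Sym2 V) → ℝ} (hfg : ∀ T ∈ E.powerset, f T ≤ g T) :
    cube p E f ≤ cube p E g :=
  Finset.sum_le_sum fun T hT =>
    mul_le_mul_of_nonneg_left (hfg T hT) (W_nonneg hp0 hp1 E T)

lemma W_union (p : Sym2 V → ℝ) {E1 E2 T1 T2 : Finset (Sym2 V)} (hE : Disjoint E1 E2)
    (h1 : T1 ⊆ E1) (h2 : T2 ⊆ E2) :
    W p (E1 ∪ E2) (T1 ∪ T2) = W p E1 T1 * W p E2 T2 := by
  have hT : Disjoint T1 T2 := hE.mono h1 h2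
  have hsd : (E1 ∪ E2) \ (T1 ∪ T2) = (E1 \ T1) ∪ (E2 \ T2) := by
    ext e
    simp only [Finset.mem_sdiff, Finset.mem_union]
    constructor
    · rintro ⟨h | h, hn⟩
      · exact Or.inl ⟨h, fun hh => hn (Or.inl hh)⟩
      · exact Or.inr ⟨h, fun hh => hn (Or.inr hh)⟩
    · rintro (⟨he, hn⟩ | ⟨he, hn⟩)
      · refine ⟨Or.inl he, ?_⟩
        rintro (h | h)
        · exact hn h
        · exact (Finset.disjoint_left.1 hE he) (h2 h)
      · refine ⟨Or.inr he, ?_⟩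
        rintro (h | h)
        · exact (Finset.disjoint_right.1 hE he) (h1 h)
        · exact hn h
  rw [W, W, W, Finset.prod_union hT, hsd,
    Finset.prod_union (hE.mono Finset.sdiff_subset Finset.sdiff_subset)]
  ring

lemma cube_split (p : Sym2 V → ℝ) {E1 E2 : Finset (Sym2 V)} (hE : Disjoint E1 E2)
    (f : Finset (Sym2 V) → ℝ) :
    cube p (E1 ∪ E2) f = cube p E1 (fun T1 => cube p E2 (fun T2 => f (T1 ∪ T2))) := by
  unfold cube
  simp_rw [Finset.mul_sum]
  rw [← Finset.sum_product']
  apply Finset.sum_nbij' (fun T => (T ∩ E1, T ∩ E2)) (fun q => q.1 ∪ q.2)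
  · intro T hT
    rw [Finset.mem_powerset] at hT
    rw [Finset.mem_product]
    exact ⟨Finset.mem_powerset.2 Finset.inter_subset_right,
      Finset.mem_powerset.2 Finset.inter_subset_right⟩
  · intro q hq
    rw [Finset.mem_product, Finset.mem_powerset, Finset.mem_powerset] at hq
    exact Finset.mem_powerset.2 (Finset.union_subset_union hq.1 hq.2)
  · intro T hT
    rw [Finset.mem_powerset] at hT
    rw [← Finset.inter_union_distrib_left]
    exact Finset.inter_eq_left.2 hT
  · intro q hq
    rw [Finset.mem_product, Finset.mem_powerset, Finset.mem_powerset] at hq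
    have h1 : (q.1 ∪ q.2) ∩ E1 = q.1 := by
      rw [Finset.union_inter_distrib_right, Finset.inter_eq_left.2 hq.1,
        Finset.disjoint_iff_inter_eq_empty.1
          (Finset.disjoint_left.2 fun e he => Finset.disjoint_right.1 hE (hq.2 he)),
        Finset.union_empty]
    have h2 : (q.1 ∪ q.2) ∩ E2 = q.2 := by
      rw [Finset.union_inter_distrib_right, Finset.inter_eq_left.2 hq.2,
        Finset.disjoint_iff_inter_eq_empty.1
          (Finset.disjoint_left.2 fun e he => Finset.disjoint_left.1 hE (hq.1 he)),
        Finset.empty_union]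
    rw [h1, h2]
  · intro T hT
    rw [Finset.mem_powerset] at hT
    have hun : T ∩ E1 ∪ T ∩ E2 = T := by
      rw [← Finset.inter_union_distrib_left]
      exact Finset.inter_eq_left.2 hT
    dsimp only
    rw [← mul_assoc, ← W_union p hE Finset.inter_subset_right Finset.inter_subset_right, hun]

lemma cube_restrict (p : Sym2 V → ℝ) {E E' : Finset (Sym2 V)} (hsub : E' ⊆ E)
    {f : Finset (Sym2 V) → ℝ} (hf : ∀ T, f T = f (T ∩ E')) : cube p E f = cube p E' f := by
  have hE : E = E' ∪ (E \ E') := (Finset.union_sdiff_of_subset hsub).symm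
  rw [hE, cube_split p Finset.disjoint_sdiff f]
  apply cube_congr
  intro T1 hT1
  rw [Finset.mem_powerset] at hT1
  have h0 : ∀ T2 ∈ (E \ E').powerset, f (T1 ∪ T2) = f T1 := by
    intro T2 hT2
    rw [Finset.mem_powerset] at hT2
    have harg : (T1 ∪ T2) ∩ E' = T1 := by
      rw [Finset.union_inter_distrib_right, Finset.inter_eq_left.2 hT1,
        Finset.disjoint_iff_inter_eq_empty.1
          (Finset.disjoint_left.2 fun e he =>
            Finset.disjoint_left.1 Finset.sdiff_disjoint (hT2 he)),
        Finset.union_empty]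
    rw [hf (T1 ∪ T2), harg]
  rw [cube_congr p _ h0, cube_const]

lemma cube_factor (p : Sym2 V → ℝ) {E1 E2 : Finset (Sym2 V)} (hE : Disjoint E1 E2)
    (g h : Finset (Sym2 V) → ℝ) :
    cube p (E1 ∪ E2) (fun T => g (T ∩ E1) * h (T ∩ E2))
      = cube p E1 g * cube p E2 h := by
  rw [cube_split p hE]
  have hout : ∀ T1 ∈ E1.powerset,
      cube p E2 (fun T2 => g ((T1 ∪ T2) ∩ E1) * h ((T1 ∪ T2) ∩ E2)) = g T1 * cube p E2 h := by
    intro T1 hT1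
    rw [Finset.mem_powerset] at hT1
    rw [← cube_smul]
    apply cube_congr
    intro T2 hT2
    rw [Finset.mem_powerset] at hT2
    have h1 : (T1 ∪ T2) ∩ E1 = T1 := by
      rw [Finset.union_inter_distrib_right, Finset.inter_eq_left.2 hT1,
        Finset.disjoint_iff_inter_eq_empty.1
          (Finset.disjoint_left.2 fun e he => Finset.disjoint_right.1 hE (hT2 he)),
        Finset.union_empty]
    have h2 : (T1 ∪ T2) ∩ E2 = T2 := by
      rw [Finset.union_inter_distrib_right, Finset.inter_eq_left.2 hT2,
        Finset.disjoint_iff_inter_eq_empty.1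
          (Finset.disjoint_left.2 fun e he => Finset.disjoint_left.1 hE (hT1 he)),
        Finset.empty_union]
    rw [h1, h2]
  rw [cube_congr p _ hout, cube_mul_const]

/-- The set of (off-diagonal) potential edges within `S`. -/
def ES (S : Finset V) : Finset (Sym2 V) := S.sym2.filter (fun e => ¬ e.IsDiag)

lemma mem_ES {S : Finset V} {u v : V} : s(u, v) ∈ ES S ↔ u ∈ S ∧ v ∈ S ∧ u ≠ v := by
  rw [ES, Finset.mem_filter, Finset.mk_mem_sym2_iff, Sym2.mk_isDiag_iff]
  tauto

lemma ES_mono {S S' : Finset V} (h : S ⊆ S') : ES S ⊆ ES S' :=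
  Finset.filter_subset_filter _ (Finset.sym2_mono h)

lemma W_eq_prod (p : Sym2 V → ℝ) (E T : Finset (Sym2 V)) (hT : T ⊆ E) :
    W p E T = ∏ e ∈ E, (if e ∈ T then p e else 1 - p e) := by
  rw [W, Finset.prod_ite]
  congr 2
  · rw [Finset.filter_mem_eq_inter, Finset.inter_eq_right.2 hT]
  · rw [← Finset.sdiff_eq_filter]

/-- The key subcritical moment-generating-function bound, by strong induction on the
vertex set. -/
theorem mgf_bound (p : Sym2 V → ℝ) (hp0 : ∀ e, 0 ≤ p e) (hp1 : ∀ e, p e ≤ 1)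
    (V0 : Finset V) (mu z g : ℝ) (hz : 1 ≤ z) (hg : 1 ≤ g)
    (hmu : ∀ x ∈ V0, ∑ y ∈ V0.erase x, p s(x, y) ≤ mu)
    (hkey : z * Real.exp (mu * (g - 1)) ≤ g) (S : Finset V) :
    S ⊆ V0 →
      ((∀ x ∈ S, cube p (ES S) (fun T => z ^ (clus S T {x}).card) ≤ g) ∧
       (∀ A : Finset V, A ⊆ S →
          cube p (ES S) (fun T => z ^ (clus S T A).card) ≤ g ^ A.card)) := by
  induction S using Finset.strongInduction with
  | _ S IH =>
    intro hSV0
    have hz0 : (0:ℝ) ≤ z := le_trans zero_le_one hz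
    have hg0 : (0:ℝ) ≤ g := le_trans zero_le_one hg
    have claim1 : ∀ x ∈ S, cube p (ES S) (fun T => z ^ (clus S T {x}).card) ≤ g := by
      intro x hx
      set S' := S.erase x with hS'def
      have hS'ss : S' ⊂ S := Finset.erase_ssubset hx
      set E1 : Finset (Sym2 V) := S'.image (fun y => s(x, y)) with hE1def
      set E2 : Finset (Sym2 V) := ES S' with hE2def
      have hE1x : ∀ e ∈ E1, ∃ y ∈ S', e = s(x, y) := by
        intro e he
        rcases Finset.mem_image.1 he with ⟨y, hy, rfl⟩
        exact ⟨y, hy, rfl⟩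
      have hxS' : x ∉ S' := Finset.notMem_erase x S
      have hE2x : ∀ u v : V, u ∈ S' → v ∈ S' → s(u, v) ∉ E1 := by
        intro u v hu hv hmem
        rcases hE1x _ hmem with ⟨y, hy, heq⟩
        rw [Sym2.eq_iff] at heq
        rcases heq with ⟨rfl, rfl⟩ | ⟨rfl, rfl⟩
        · exact hxS' hu
        · exact hxS' hv
      have hdisj : Disjoint E1 E2 := by
        rw [Finset.disjoint_left]
        intro e he1 he2
        rcases hE1x e he1 with ⟨y, hy, rfl⟩
        rw [hE2def, ES, Finset.mem_filter, Finset.mk_mem_sym2_iff] at he2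
        exact hxS' he2.1.1
      have hsubES : E1 ∪ E2 ⊆ ES S := by
        apply Finset.union_subset
        · intro e he
          rcases hE1x e he with ⟨y, hy, rfl⟩
          exact mem_ES.2 ⟨hx, Finset.mem_of_mem_erase hy, (Finset.ne_of_mem_erase hy).symm⟩
        · exact ES_mono (Finset.erase_subset x S)
      have hloc : ∀ T : Finset (Sym2 V), clus S T {x} = clus S (T ∩ (E1 ∪ E2)) {x} := by
        intro T
        apply clus_congr
        intro u v hu hv huv
        have hmem : s(u, v) ∈ E1 ∪ E2 := by
          by_cases hux : u = x
          · subst hux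
            exact Finset.mem_union_left _
              (Finset.mem_image_of_mem _ (Finset.mem_erase.2 ⟨(Ne.symm huv), hv⟩))
          · by_cases hvx : v = x
            · subst hvx
              rw [Sym2.eq_swap]
              exact Finset.mem_union_left _
                (Finset.mem_image_of_mem _ (Finset.mem_erase.2 ⟨hux, hu⟩))
            · exact Finset.mem_union_right _
                (mem_ES.2 ⟨Finset.mem_erase.2 ⟨hux, hu⟩, Finset.mem_erase.2 ⟨hvx, hv⟩, huv⟩)
        simp [Finset.mem_inter, hmem]
      have step1 : cube p (ES S) (fun T => z ^ (clus S T {x}).card)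
          = cube p (E1 ∪ E2) (fun T => z ^ (clus S T {x}).card) := by
        apply cube_restrict p hsubES
        intro T
        rw [← hloc T]
      rw [step1, cube_split p hdisj]
      have inner : ∀ T1 ∈ E1.powerset,
          cube p E2 (fun T2 => z ^ (clus S (T1 ∪ T2) {x}).card) ≤ z * g ^ T1.card := by
        intro T1 hT1
        rw [Finset.mem_powerset] at hT1
        set N : Finset V := S'.filter (fun y => s(x, y) ∈ T1) with hNdef
        have hNsub : N ⊆ S' := Finset.filter_subset _ _
        have hNcard : N.card = T1.card := by
          have himg : N.image (fun y => s(x, y)) = T1 := by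
            ext e
            constructor
            · intro he
              rcases Finset.mem_image.1 he with ⟨y, hy, rfl⟩
              exact (Finset.mem_filter.1 hy).2
            · intro he
              rcases hE1x e (hT1 he) with ⟨y, hy, rfl⟩
              exact Finset.mem_image_of_mem _ (Finset.mem_filter.2 ⟨hy, he⟩)
          rw [← himg, Finset.card_image_of_injOn fun y _ y' _ heq => Sym2.congr_right.1 heq]
        have hinner_eq : ∀ T2 ∈ E2.powerset,
            z ^ (clus S (T1 ∪ T2) {x}).card = z * z ^ (clus S' T2 N).card := by
          intro T2 hT2
          rw [Finset.mem_powerset] at hT2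
          have hcard := card_clus_point (T := T1 ∪ T2) hx
          have hNN : S'.filter (fun y => s(x, y) ∈ T1 ∪ T2) = N := by
            have hnot : ∀ y, y ∈ S' → s(x, y) ∉ T2 := by
              intro y hy hmem
              have h2 := hT2 hmem
              rw [hE2def, ES, Finset.mem_filter, Finset.mk_mem_sym2_iff] at h2
              exact hxS' h2.1.1
            ext y
            simp only [hNdef, Finset.mem_filter, Finset.mem_union]
            constructor
            · rintro ⟨hy, h | h⟩
              · exact ⟨hy, h⟩
              · exact absurd h (hnot y hy)
            · rintro ⟨hy, h⟩
              exact ⟨hy, Or.inl h⟩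
          have hclusS' : clus S' (T1 ∪ T2) N = clus S' T2 N := by
            apply clus_congr
            intro u v hu hv huv
            have hn1 : s(u, v) ∉ T1 := fun hmem => hE2x u v hu hv (hT1 hmem)
            simp [Finset.mem_union, hn1]
          rw [hcard, hNN, hclusS', pow_add, pow_one]
        calc cube p E2 (fun T2 => z ^ (clus S (T1 ∪ T2) {x}).card)
            = cube p E2 (fun T2 => z * z ^ (clus S' T2 N).card) := cube_congr p _ hinner_eq
          _ = z * cube p E2 (fun T2 => z ^ (clus S' T2 N).card) := cube_smul p _ _ _
          _ ≤ z * g ^ N.card := by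
              apply mul_le_mul_of_nonneg_left _ hz0
              exact (IH S' hS'ss (subset_trans (Finset.erase_subset x S) hSV0)).2 N hNsub
          _ = z * g ^ T1.card := by rw [hNcard]
      calc cube p E1 (fun T1 => cube p E2 (fun T2 => z ^ (clus S (T1 ∪ T2) {x}).card))
          ≤ cube p E1 (fun T1 => z * g ^ T1.card) := cube_mono hp0 hp1 _ inner
        _ = z * cube p E1 (fun T1 => g ^ T1.card) := cube_smul p _ _ _
        _ = z * ∏ e ∈ E1, (p e * g + (1 - p e)) := by
            congr 1
            rw [Finset.prod_add]
            apply Finset.sum_congr rfl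
            intro T1 _
            rw [W, Finset.prod_mul_distrib, Finset.prod_const]
            ring
        _ ≤ z * Real.exp (mu * (g - 1)) := by
            apply mul_le_mul_of_nonneg_left _ hz0
            calc ∏ e ∈ E1, (p e * g + (1 - p e))
                ≤ ∏ e ∈ E1, Real.exp (p e * (g - 1)) := by
                  apply Finset.prod_le_prod
                  · intro e _
                    nlinarith [hp0 e, hp1 e]
                  · intro e _
                    nlinarith [Real.add_one_le_exp (p e * (g - 1))]
              _ = Real.exp (∑ e ∈ E1, p e * (g - 1)) := (Real.exp_sum _ _).symm
              _ ≤ Real.exp (mu * (g - 1)) := by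
                  apply Real.exp_le_exp.2
                  rw [← Finset.sum_mul]
                  apply mul_le_mul_of_nonneg_right _ (by linarith)
                  have hsi : ∑ e ∈ E1, p e = ∑ y ∈ S', p s(x, y) :=
                    Finset.sum_image fun y _ y' _ heq => Sym2.congr_right.1 heq
                  rw [hsi]
                  calc ∑ y ∈ S', p s(x, y) ≤ ∑ y ∈ V0.erase x, p s(x, y) := by
                        apply Finset.sum_le_sum_of_subset_of_nonneg
                        · exact fun y hy => Finset.mem_erase.2
                            ⟨Finset.ne_of_mem_erase hy, hSV0 (Finset.mem_of_mem_erase hy)⟩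
                        · exact fun y _ _ => hp0 _
                    _ ≤ mu := hmu x (hSV0 hx)
        _ ≤ g := hkey
    refine ⟨claim1, ?_⟩
    intro A hAS
    rcases Finset.eq_empty_or_nonempty A with rfl | ⟨a, ha⟩
    · rw [Finset.card_empty, pow_zero]
      have h1 : ∀ T ∈ (ES S).powerset, z ^ (clus S T (∅ : Finset V)).card = 1 := by
        intro T _
        rw [clus_empty, Finset.card_empty, pow_zero]
      rw [cube_congr p _ h1, cube_const]
    · have haS : a ∈ S := hAS ha
      have hpoint : ∀ T ∈ (ES S).powerset,
          z ^ (clus S T A).card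
            = ∑ K ∈ S.powerset, (if clus S T {a} = K then z ^ (clus S T A).card else 0) := by
        intro T _
        rw [Finset.sum_ite_eq S.powerset (clus S T {a})
          (fun _ => z ^ (clus S T A).card)]
        rw [if_pos (Finset.mem_powerset.2 (clus_subset _ _ _))]
      rw [cube_congr p _ hpoint, cube_sum]
      have perK : ∀ K ∈ S.powerset,
          cube p (ES S) (fun T => if clus S T {a} = K then z ^ (clus S T A).card else 0)
            ≤ (z ^ K.card
                * cube p (ES S) (fun T => if clus S T {a} = K then (1:ℝ) else 0))
              * g ^ (A.erase a).card := by
        intro K hK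
        rw [Finset.mem_powerset] at hK
        by_cases haK : a ∈ K
        case neg =>
          have h0 : ∀ T ∈ (ES S).powerset,
              (if clus S T {a} = K then z ^ (clus S T A).card else 0) = (0:ℝ) := by
            intro T _
            rw [if_neg]
            intro h
            exact haK (h ▸ mem_clus_self haS (Finset.mem_singleton_self a))
          rw [cube_congr p _ h0, cube_const]
          apply mul_nonneg (mul_nonneg (pow_nonneg hz0 _) _) (pow_nonneg hg0 _)
          apply cube_nonneg hp0 hp1
          intro T _
          split <;> norm_num
        case pos =>
          have hKne : K.Nonempty := ⟨a, haK⟩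
          set A'' : Finset V := (A.erase a) \ K with hA''def
          set E1 : Finset (Sym2 V) := ES S \ ES (S \ K) with hE1def
          set E2 : Finset (Sym2 V) := ES (S \ K) with hE2def
          have hE2sub : E2 ⊆ ES S := ES_mono Finset.sdiff_subset
          have hdisj : Disjoint E1 E2 := Finset.sdiff_disjoint
          have hunion : E1 ∪ E2 = ES S := Finset.sdiff_union_of_subset hE2sub
          have hindiff : ∀ T : Finset (Sym2 V),
              (clus S T {a} = K ↔ clus S (T ∩ E1) {a} = K) := by
            intro T
            have hedge : ∀ u v : V, u ∈ K → v ∈ S → u ≠ v → s(u, v) ∈ E1 := by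
              intro u v hu hv huv
              rw [hE1def, Finset.mem_sdiff]
              constructor
              · exact mem_ES.2 ⟨hK hu, hv, huv⟩
              · intro hmem
                rw [hE2def] at hmem
                have h2 := mem_ES.1 hmem
                exact (Finset.mem_sdiff.1 h2.1).2 hu
            constructor
            · intro h
              exact clus_point_congr haS h fun u v hu hv huv => by
                simp [Finset.mem_inter, hedge u v hu hv huv]
            · intro h
              exact clus_point_congr haS h fun u v hu hv huv => by
                simp [Finset.mem_inter, hedge u v hu hv huv]
          have hpw : ∀ T ∈ (ES S).powerset,
              (if clus S T {a} = K then z ^ (clus S T A).card else 0)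
                = z ^ K.card * ((if clus S T {a} = K then (1:ℝ) else 0)
                    * z ^ (clus (S \ K) T A'').card) := by
            intro T _
            by_cases h : clus S T {a} = K
            · rw [if_pos h, if_pos h, one_mul, ← pow_add]
              congr 1
              exact card_clus_decomp ha hAS h
            · rw [if_neg h, if_neg h]
              ring
          rw [cube_congr p _ hpw, cube_smul]
          have hfac : cube p (ES S)
                (fun T => (if clus S T {a} = K then (1:ℝ) else 0)
                  * z ^ (clus (S \ K) T A'').card)
              = cube p E1 (fun T1 => if clus S T1 {a} = K then (1:ℝ) else 0)
                * cube p E2 (fun T2 => z ^ (clus (S \ K) T2 A'').card) := by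
            rw [← hunion]
            rw [cube_congr p (E1 ∪ E2) (g := fun T =>
              (if clus S (T ∩ E1) {a} = K then (1:ℝ) else 0)
                * z ^ (clus (S \ K) (T ∩ E2) A'').card)]
            · exact cube_factor p hdisj (fun T1 => if clus S T1 {a} = K then (1:ℝ) else 0)
                (fun T2 => z ^ (clus (S \ K) T2 A'').card)
            · intro T _
              have hcc : clus (S \ K) T A'' = clus (S \ K) (T ∩ E2) A'' := by
                apply clus_congr
                intro u v hu hv huv
                have hmem : s(u, v) ∈ E2 := by
                  rw [hE2def]
                  exact mem_ES.2 ⟨hu, hv, huv⟩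
                simp [Finset.mem_inter, hmem]
              rw [if_congr (hindiff T) rfl rfl, hcc]
          rw [hfac]
          have hIH2 : cube p E2 (fun T2 => z ^ (clus (S \ K) T2 A'').card)
              ≤ g ^ A''.card := by
            have hss : S \ K ⊂ S := Finset.sdiff_ssubset hK hKne
            apply (IH (S \ K) hss (subset_trans Finset.sdiff_subset hSV0)).2 A''
            intro b hb
            rw [hA''def, Finset.mem_sdiff] at hb
            exact Finset.mem_sdiff.2 ⟨hAS (Finset.mem_of_mem_erase hb.1), hb.2⟩
          have hcnn : 0 ≤ cube p E1 (fun T1 => if clus S T1 {a} = K then (1:ℝ) else 0) := by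
            apply cube_nonneg hp0 hp1
            intro T _
            split <;> norm_num
          calc z ^ K.card * (cube p E1 (fun T1 => if clus S T1 {a} = K then (1:ℝ) else 0)
                  * cube p E2 (fun T2 => z ^ (clus (S \ K) T2 A'').card))
              ≤ z ^ K.card * (cube p E1 (fun T1 => if clus S T1 {a} = K then (1:ℝ) else 0)
                  * g ^ (A.erase a).card) := by
                apply mul_le_mul_of_nonneg_left _ (pow_nonneg hz0 _)
                apply mul_le_mul_of_nonneg_left _ hcnn
                calc cube p E2 (fun T2 => z ^ (clus (S \ K) T2 A'').card)
                    ≤ g ^ A''.card := hIH2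
                  _ ≤ g ^ (A.erase a).card :=
                      pow_le_pow_right₀ hg (Finset.card_le_card Finset.sdiff_subset)
            _ = (z ^ K.card
                  * cube p (ES S) (fun T => if clus S T {a} = K then (1:ℝ) else 0))
                * g ^ (A.erase a).card := by
                have hres : cube p E1 (fun T1 => if clus S T1 {a} = K then (1:ℝ) else 0)
                    = cube p (ES S) (fun T => if clus S T {a} = K then (1:ℝ) else 0) := by
                  symm
                  apply cube_restrict p (by rw [← hunion]; exact Finset.subset_union_left)
                  intro T
                  rw [if_congr (hindiff T) rfl rfl]
                rw [hres]
                ring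
      calc ∑ K ∈ S.powerset,
            cube p (ES S) (fun T => if clus S T {a} = K then z ^ (clus S T A).card else 0)
          ≤ ∑ K ∈ S.powerset,
              (z ^ K.card
                * cube p (ES S) (fun T => if clus S T {a} = K then (1:ℝ) else 0))
                * g ^ (A.erase a).card := Finset.sum_le_sum perK
        _ = (∑ K ∈ S.powerset,
              cube p (ES S) (fun T => z ^ K.card
                * (if clus S T {a} = K then (1:ℝ) else 0))) * g ^ (A.erase a).card := by
            rw [← Finset.sum_mul]
            congr 1
            apply Finset.sum_congr rfl
            intro K _
            rw [cube_smul]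
        _ = cube p (ES S) (fun T => ∑ K ∈ S.powerset,
              z ^ K.card * (if clus S T {a} = K then (1:ℝ) else 0)) * g ^ (A.erase a).card := by
            rw [cube_sum]
        _ = cube p (ES S) (fun T => z ^ (clus S T {a}).card) * g ^ (A.erase a).card := by
            congr 1
            apply cube_congr
            intro T _
            simp only [mul_ite, mul_one, mul_zero]
            rw [Finset.sum_ite_eq S.powerset (clus S T {a}) (fun K => z ^ K.card)]
            rw [if_pos (Finset.mem_powerset.2 (clus_subset _ _ _))]
        _ ≤ g * g ^ (A.erase a).card :=
            mul_le_mul_of_nonneg_right (claim1 a haS) (pow_nonneg hg0 _)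
        _ = g ^ A.card := by
            rw [mul_comm, ← pow_succ, Finset.card_erase_add_one ha]




section Count

variable {d L : ℕ}

lemma hnorm_zero : hnorm (0 : HLat d L) = 0 := by
  simp [hnorm]

lemma hnorm_neg (x : HLat d L) : hnorm (-x) = hnorm x := by
  simp [hnorm, Finsupp.support_neg]

lemma hnorm_le_iff (hL : 2 ≤ L) {x : HLat d L} {m : ℕ} :
    hnorm x ≤ L ^ m ↔ ∀ i ∈ x.support, i < m := by
  unfold hnorm
  rw [Finset.sup_le_iff]
  apply forall_congr'
  intro i
  apply imp_congr_right
  intro _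
  rw [Nat.pow_le_pow_iff_right (by omega : 1 < L)]
  omega

lemma zero_mem_Lambda {n : ℕ} : (0 : HLat d L) ∈ Lambda d L n := by
  show hnorm (0 : HLat d L) ≤ L ^ n
  rw [hnorm_zero]
  exact Nat.zero_le _

lemma Lambda_sub_mem (hL : 2 ≤ L) {n : ℕ} {x y : HLat d L}
    (hx : x ∈ Lambda d L n) (hy : y ∈ Lambda d L n) : x - y ∈ Lambda d L n := by
  have hx' : hnorm x ≤ L ^ n := hx
  have hy' : hnorm y ≤ L ^ n := hy
  show hnorm (x - y) ≤ L ^ n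
  rw [hnorm_le_iff hL] at hx' hy' ⊢
  intro i hi
  rcases Finset.mem_union.1 (Finsupp.support_sub hi) with h | h
  · exact hx' i h
  · exact hy' i h

lemma hnorm_eq (hL : 2 ≤ L) {x : HLat d L} (hx : x ≠ 0) :
    hnorm x = L ^ (x.support.max' (Finsupp.support_nonempty_iff.2 hx) + 1) := by
  unfold hnorm
  apply le_antisymm
  · apply Finset.sup_le
    intro i hi
    exact Nat.pow_le_pow_right (by omega)
      (by have := Finset.le_max' _ i hi; omega)
  · exact Finset.le_sup (f := fun i => L ^ (i + 1)) (Finset.max'_mem _ _)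

lemma card_Lambda (hL : 2 ≤ L) (hfin : ∀ m : ℕ, (Lambda d L m).Finite) (m : ℕ) :
    ((hfin m).toFinset).card = L ^ (m * d) := by
  haveI : NeZero L := ⟨by omega⟩
  have h1 : ((hfin m).toFinset).card = Nat.card (Lambda d L m) := by
    rw [Nat.card_coe_set_eq, Set.ncard_eq_toFinset_card _ (hfin m)]
  rw [h1]
  have e1 : Lambda d L m ≃ {f : HLat d L // ↑f.support ⊆ ((Finset.range m : Finset ℕ) : Set ℕ)} := by
    apply Equiv.subtypeEquivRight
    intro x
    show hnorm x ≤ L ^ m ↔ _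
    rw [hnorm_le_iff hL]
    constructor
    · intro h i hi
      simp only [Finset.coe_range, Set.mem_Iio]
      exact h i hi
    · intro h i hi
      have := h hi
      simpa using this
  have e2 := Finsupp.restrictSupportEquiv ((Finset.range m : Finset ℕ) : Set ℕ) (Fin d → ZMod L)
  have e3 : (((Finset.range m : Finset ℕ) : Set ℕ) →₀ (Fin d → ZMod L))
      ≃ (((Finset.range m : Finset ℕ) : Set ℕ) → (Fin d → ZMod L)) :=
    Finsupp.equivFunOnFinite
  rw [Nat.card_congr ((e1.trans e2).trans e3)]
  rw [Nat.card_fun]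
  have hc1 : Nat.card ((Finset.range m : Finset ℕ) : Set ℕ) = m := by
    rw [Nat.card_coe_set_eq, Set.ncard_coe_finset, Finset.card_range]
  have hc2 : Nat.card (Fin d → ZMod L) = L ^ d := by
    rw [Nat.card_fun, Nat.card_zmod, Nat.card_eq_fintype_card, Fintype.card_fin]
  rw [hc1, hc2, ← pow_mul, mul_comm d m]

lemma Lambda_mono_toFinset (hfin : ∀ m : ℕ, (Lambda d L m).Finite) {i j : ℕ} (hL : 1 ≤ L)
    (hij : i ≤ j) : (hfin i).toFinset ⊆ (hfin j).toFinset := by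
  intro y hy
  rw [Set.Finite.mem_toFinset] at hy ⊢
  exact le_trans hy (Nat.pow_le_pow_right (by omega) hij)

/-- Summation over the shells of the ball `Λ_n`. -/
lemma sum_over_shell (hL : 2 ≤ L) (hfin : ∀ m : ℕ, (Lambda d L m).Finite)
    (n : ℕ) (f : ℕ → ℝ) :
    ∑ y ∈ ((hfin n).toFinset).erase 0, f (hnorm y)
      = ∑ i ∈ Finset.Icc 1 n, ((L:ℝ) ^ (i*d) - (L:ℝ) ^ ((i-1)*d)) * f (L ^ i) := by
  classical
  have hmem : ∀ {m : ℕ} {y : HLat d L}, y ∈ (hfin m).toFinset ↔ hnorm y ≤ L ^ m := by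
    intro m y
    rw [Set.Finite.mem_toFinset]
    rfl
  set lvl : HLat d L → ℕ := fun y =>
    if h : y = 0 then 0 else (y.support.max' (Finsupp.support_nonempty_iff.2 h)) + 1 with hlvl
  have hmaps : ∀ y ∈ ((hfin n).toFinset).erase 0, lvl y ∈ Finset.Icc 1 n := by
    intro y hy
    have hy0 : y ≠ 0 := Finset.ne_of_mem_erase hy
    have hyS : hnorm y ≤ L ^ n := hmem.1 (Finset.mem_of_mem_erase hy)
    rw [hlvl]
    simp only [dif_neg hy0]
    rw [Finset.mem_Icc]
    refine ⟨by omega, ?_⟩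
    rw [hnorm_eq hL hy0] at hyS
    exact (Nat.pow_le_pow_iff_right (by omega : 1 < L)).1 hyS
  rw [← Finset.sum_fiberwise_of_maps_to hmaps (fun y => f (hnorm y))]
  apply Finset.sum_congr rfl
  intro i hi
  rw [Finset.mem_Icc] at hi
  have hval : ∀ y : HLat d L, y ≠ 0 → lvl y = i → hnorm y = L ^ i := by
    intro y hy0 hlv
    rw [hnorm_eq hL hy0]
    rw [hlvl] at hlv
    simp only [dif_neg hy0] at hlv
    rw [hlv]
  have hsub : (hfin (i-1)).toFinset ⊆ (hfin i).toFinset :=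
    Lambda_mono_toFinset hfin (by omega) (by omega)
  have hfib : (((hfin n).toFinset).erase 0).filter (fun y => lvl y = i)
      = (hfin i).toFinset \ (hfin (i-1)).toFinset := by
    ext y
    simp only [Finset.mem_filter, Finset.mem_erase, Finset.mem_sdiff, hmem]
    constructor
    · rintro ⟨⟨hy0, _⟩, hlv⟩
      have heq := hval y hy0 hlv
      constructor
      · rw [heq]
      · rw [heq]
        intro hle
        have := (Nat.pow_le_pow_iff_right (by omega : 1 < L)).1 hle
        omega
    · rintro ⟨hyi, hyim⟩
      have hy0 : y ≠ 0 := by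
        rintro rfl
        exact hyim (by rw [hnorm_zero]; exact Nat.zero_le _)
      have heq := hnorm_eq hL hy0
      have h1 : y.support.max' (Finsupp.support_nonempty_iff.2 hy0) + 1 ≤ i :=
        (Nat.pow_le_pow_iff_right (by omega : 1 < L)).1 (heq ▸ hyi)
      have h2 : ¬ (y.support.max' (Finsupp.support_nonempty_iff.2 hy0) + 1 ≤ i - 1) :=
        fun hc => hyim (heq ▸ Nat.pow_le_pow_right (by omega) hc)
      have hji : y.support.max' (Finsupp.support_nonempty_iff.2 hy0) + 1 = i := by omega
      refine ⟨⟨hy0, ?_⟩, ?_⟩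
      · rw [heq, hji]
        exact Nat.pow_le_pow_right (by omega) hi.2
      · rw [hlvl]
        simp only [dif_neg hy0]
        exact hji
  rw [hfib]
  have hval2 : ∀ y ∈ (hfin i).toFinset \ (hfin (i-1)).toFinset, f (hnorm y) = f (L ^ i) := by
    intro y hy
    rw [Finset.mem_sdiff, hmem, hmem] at hy
    have hy0 : y ≠ 0 := by
      rintro rfl
      exact hy.2 (by rw [hnorm_zero]; exact Nat.zero_le _)
    have heq := hnorm_eq hL hy0
    have h1 : y.support.max' (Finsupp.support_nonempty_iff.2 hy0) + 1 ≤ i :=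
      (Nat.pow_le_pow_iff_right (by omega : 1 < L)).1 (heq ▸ hy.1)
    have h2 : ¬ (y.support.max' (Finsupp.support_nonempty_iff.2 hy0) + 1 ≤ i - 1) :=
      fun hc => hy.2 (heq ▸ Nat.pow_le_pow_right (by omega) hc)
    have hji : y.support.max' (Finsupp.support_nonempty_iff.2 hy0) + 1 = i := by omega
    rw [heq, hji]
  rw [Finset.sum_congr rfl hval2, Finset.sum_const, nsmul_eq_mul]
  congr 1
  rw [Finset.card_sdiff_of_subset hsub, card_Lambda hL hfin, card_Lambda hL hfin]
  have hle : L ^ ((i-1)*d) ≤ L ^ (i*d) :=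
    Nat.pow_le_pow_right (by omega) (Nat.mul_le_mul_right _ (by omega))
  push_cast [hle]
  ring

/-- Translating sums over `Λ_n \ {x}` to sums over `Λ_n \ {0}`. -/
lemma sum_erase_shift (hL : 2 ≤ L) (hfin : ∀ m : ℕ, (Lambda d L m).Finite)
    (n : ℕ) (x : HLat d L) (hx : x ∈ (hfin n).toFinset) (f : ℕ → ℝ) :
    ∑ y ∈ ((hfin n).toFinset).erase x, f (hnorm (x - y))
      = ∑ y ∈ ((hfin n).toFinset).erase 0, f (hnorm y) := by
  have hmem : ∀ {y : HLat d L}, y ∈ (hfin n).toFinset ↔ y ∈ Lambda d L n := by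
    intro y
    rw [Set.Finite.mem_toFinset]
  apply Finset.sum_nbij' (fun y => x - y) (fun y => x - y)
  · intro y hy
    rw [Finset.mem_erase] at hy ⊢
    constructor
    · exact sub_ne_zero.2 fun h => hy.1 h.symm
    · exact hmem.2 (Lambda_sub_mem hL (hmem.1 hx) (hmem.1 hy.2))
  · intro y hy
    rw [Finset.mem_erase] at hy ⊢
    constructor
    · intro h
      rw [sub_eq_self] at h
      exact hy.1 h
    · exact hmem.2 (Lambda_sub_mem hL (hmem.1 hx) (hmem.1 hy.2))
  · intro y _
    exact sub_sub_cancel x y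
  · intro y _
    exact sub_sub_cancel x y
  · intro y _
    rfl

end Count

section Analysis

lemma aux_exp_inv (t : ℝ) : (1 + t) * Real.exp (-t) ≤ 1 := by
  have h := mul_le_mul_of_nonneg_right (Real.add_one_le_exp t) (Real.exp_pos (-t)).le
  rwa [← Real.exp_add, add_neg_cancel, Real.exp_zero, add_comm t 1] at h

lemma one_sub_exp_le (a : ℝ) : 1 - Real.exp (-a) ≤ a := by
  nlinarith [Real.add_one_le_exp (-a)]

lemma per_term_bound {c a : ℝ} (hc0 : 0 ≤ c) (hc1 : c ≤ 1) (ha : 0 ≤ a) :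
    1 - Real.exp (-(c * a)) ≤ c * ((1 + a) * (1 - Real.exp (-a))) := by
  have h1 : 1 - Real.exp (-(c * a)) ≤ c * a := one_sub_exp_le _
  have h2 : (1 + a) * Real.exp (-a) ≤ 1 := aux_exp_inv a
  have h3 : a ≤ (1 + a) * (1 - Real.exp (-a)) := by nlinarith
  calc 1 - Real.exp (-(c * a)) ≤ c * a := h1
    _ ≤ c * ((1 + a) * (1 - Real.exp (-a))) := mul_le_mul_of_nonneg_left h3 hc0

lemma le_two_mul_of_one_sub_exp_le {a b : ℝ} (ha : 0 ≤ a)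
    (h : 1 - Real.exp (-a) ≤ b) (hb : b ≤ 1/2) : a ≤ 2 * b := by
  have hb0 : 0 ≤ b := by
    have hE : Real.exp (-a) ≤ 1 := by
      rw [show (1:ℝ) = Real.exp 0 by rw [Real.exp_zero]]
      exact Real.exp_le_exp.2 (by linarith)
    linarith
  by_contra hcon
  push_neg at hcon
  have h1 : Real.exp (-a) < Real.exp (-(2 * b)) := Real.exp_lt_exp.2 (by linarith)
  have h2 : (1 + 2 * b) * Real.exp (-(2 * b)) ≤ 1 := aux_exp_inv (2 * b)
  have hpos : (0:ℝ) < 1 + 2 * b := by linarith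
  have h3 : Real.exp (-(2 * b)) ≤ 1 - b := by
    have h4 : Real.exp (-(2 * b)) ≤ 1 / (1 + 2 * b) := by
      rw [le_div_iff₀ hpos]
      linarith [h2]
    have h5 : 1 / (1 + 2 * b) ≤ 1 - b := by
      rw [div_le_iff₀ hpos]
      nlinarith
    linarith
  linarith

lemma exp_le_one_add {t : ℝ} (ht : 0 ≤ t) : Real.exp (t - t^2) ≤ 1 + t := by
  have h1 : (0:ℝ) < 1 + t := by linarith
  have h5 : 1 / (1 + t) ≤ Real.exp (-(t / (1 + t))) := by
    have h2 := Real.add_one_le_exp (-(t / (1 + t)))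
    have h3 : (1:ℝ) / (1 + t) = 1 - t / (1 + t) := by field_simp; ring
    linarith
  have h4 : Real.exp (t / (1 + t)) ≤ 1 + t := by
    have h6 : (0:ℝ) < Real.exp (t / (1 + t)) := Real.exp_pos _
    have h7 : Real.exp (t / (1 + t)) * Real.exp (-(t / (1 + t))) = 1 := by
      rw [← Real.exp_add]
      simp
    have h8 := mul_le_mul_of_nonneg_left h5 h6.le
    rw [h7] at h8
    rw [mul_one_div, div_le_one h1] at h8
    exact h8
  have h7 : t - t^2 ≤ t / (1 + t) := by
    rw [le_div_iff₀ h1]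
    nlinarith
  exact le_trans (Real.exp_le_exp.2 h7) h4

lemma sum_Icc_one {M : Type*} [AddCommMonoid M] (n : ℕ) (f : ℕ → M) :
    ∑ i ∈ Finset.Icc 1 n, f i = ∑ j ∈ Finset.range n, f (j + 1) := by
  apply Finset.sum_nbij' (fun i => i - 1) (fun j => j + 1)
  · intro i hi
    rw [Finset.mem_Icc] at hi
    rw [Finset.mem_range]
    omega
  · intro j hj
    rw [Finset.mem_range] at hj
    rw [Finset.mem_Icc]
    omega
  · intro i hi
    rw [Finset.mem_Icc] at hi
    omega
  · intro j _
    omega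
  · intro i hi
    rw [Finset.mem_Icc] at hi
    congr 1
    omega

lemma mu_step {e t : ℝ} (he0 : 0 < e) (he1 : e < 1) (ht0 : 0 ≤ t) (ht : t < e/2) :
    (1 - e) * (1 + t) ≤ 1 - e/2 := by nlinarith

lemma markov_step {l k c : ℝ} (hl : 0 < l) (h : k < c) : 0 ≤ -(l * k) + c * l := by nlinarith

lemma pos_step {x y : ℝ} (hx : 0 < x) (hy : 2 ≤ y) : 0 < x * (y - 1) := by nlinarith

lemma ge_step {x y : ℝ} (hx : 0 < x) (hy : 2 ≤ y) : x ≤ x * (y - 1) := by nlinarith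

lemma exponent_step {a dd lnn nn ii : ℝ} (ha : 0 < a) (hln : 0 ≤ lnn) (hi : 1 ≤ ii) :
    -((nn - 1) * dd * lnn) + a * (nn * lnn) + (-a) * (ii * lnn)
      ≤ (dd - a) * lnn + nn * ((a - dd) * lnn) := by
  nlinarith [mul_nonneg (mul_nonneg ha.le (sub_nonneg.2 hi)) hln]

end Analysis


end PSub

set_option maxHeartbeats 2000000 in
/-- Purely subcritical regime: the largest component of
`G^{HL}_{Λ_n}(r^{(n)}_{-ε})` has at most `C n ε⁻²` vertices with probability tending to one. -/
theorem purely_subcritical_largest_component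
    (d L : ℕ) (hd : 1 ≤ d) (hL : 2 ≤ L)
    (A1 A2 α : ℝ) (hA1 : 0 < A1) (hA12 : A1 ≤ A2)
    (hα0 : 0 < α) (hαd : α < (d : ℝ))
    (ρ : ℝ → ℝ) (hρ0 : ρ 0 = 0)
    (hρnn : ∀ r : ℝ, 0 ≤ r → 0 ≤ ρ r)
    (hρlb : ∀ r : ℝ, 1 ≤ r → A1 * r ^ (-α) ≤ ρ r)
    (hρub : ∀ r : ℝ, 1 ≤ r → ρ r ≤ A2 * r ^ (-α))
    (ζ : ℕ → ℝ) (hζpos : ∀ n : ℕ, 1 ≤ n → 0 < ζ n)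
    (hζeq : ∀ n : ℕ, 1 ≤ n → zetaEq d L ρ n (ζ n))
    (hfin : ∀ n : ℕ, (Lambda d L n).Finite)
    {Ω : Type} [MeasurableSpace Ω] (P : Measure Ω) [IsProbabilityMeasure P]
    (F : ℕ → ℝ → Sym2 (HLat d L) → Ω → Bool)
    (hFmeas : ∀ n t s, Measurable (F n t s))
    (hFindep : ∀ (n : ℕ) (t : ℝ), iIndepFun (F n t) P)
    (hFdist : ∀ n : ℕ, 1 ≤ n → ∀ t : ℝ, -1 < t → ∀ x y : HLat d L, x ≠ y →
      P {ω | F n t s(x, y) ω = true} =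
        ENNReal.ofReal (1 - Real.exp (-(1 + t) * (ζ n)⁻¹ * ρ ((hnorm (x - y) : ℝ)))))
 :
    ∃ C : ℝ, 0 < C ∧ ∀ ε : ℝ, 0 < ε → ε < 1 →
      Tendsto (fun n : ℕ =>
          P {ω | ((((hfin n).toFinset.sup fun x =>
              compSize (graphOf (Lambda d L n) (fun s => F n (-ε) s ω)) x) : ℕ) : ℝ) ≤
            C * (n : ℝ) / ε ^ 2})
        atTop (nhds 1) := by
    classical
    have hL1 : (1:ℝ) < (L:ℝ) := by exact_mod_cast (by omega : 1 < L)
    have hL0 : (0:ℝ) < (L:ℝ) := by linarith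
    set ln : ℝ := Real.log L with hln
    have hln0 : 0 < ln := Real.log_pos hL1
    have hpowL : ∀ k : ℕ, ((L:ℝ) ^ k) = Real.exp (k * ln) := by
      intro k
      rw [hln, ← Real.log_pow, Real.exp_log (pow_pos hL0 k)]
    have hrpow : ∀ (k : ℕ) (β : ℝ), (((L:ℝ) ^ k : ℝ) ^ β : ℝ) = Real.exp (β * (k * ln)) := by
      intro k β
      rw [Real.rpow_def_of_pos (pow_pos hL0 k), Real.log_pow, hln]
      congr 1
      ring
    set C : ℝ := 16 * ((d:ℝ) * Real.log L + 1) with hC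
    have hC0 : 0 < C := by
      have h1 : 0 ≤ (d:ℝ) * Real.log L := mul_nonneg (Nat.cast_nonneg d) (Real.log_pos hL1).le
      rw [hC]; linarith
    refine ⟨C, hC0, ?_⟩
    intro ε hε0 hε1
    set lam : ℝ := ε^2/16 with hlam
    have hlam0 : 0 < lam := by rw [hlam]; positivity
    set zz : ℝ := Real.exp lam with hzz
    set gg : ℝ := 1 + ε/4 with hgg
    set mu : ℝ := 1 - ε/2 with hmu
    have hzz1 : 1 ≤ zz := Real.one_le_exp hlam0.le
    have hgg1 : 1 ≤ gg := by rw [hgg]; linarith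
    have hkey : zz * Real.exp (mu * (gg - 1)) ≤ gg := by
      rw [hzz, ← Real.exp_add]
      have h := PSub.exp_le_one_add (t := ε/4) (by linarith)
      have harg : lam + mu * (gg - 1) = ε/4 - (ε/4)^2 := by rw [hlam, hmu, hgg]; ring
      rw [harg, hgg]
      exact h
    set q : ℝ := Real.exp ((α - (d:ℝ)) * ln) with hq
    set c1 : ℝ := (2 * A2 / A1) * Real.exp (((d:ℝ) - α) * ln) with hc1
    have hA20 : 0 < A2 := lt_of_lt_of_le hA1 hA12
    have hc10 : 0 ≤ c1 := by
      rw [hc1]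
      exact mul_nonneg (div_nonneg (by linarith) hA1.le) (Real.exp_pos _).le
    have hq1 : q < 1 := by
      rw [hq]
      calc Real.exp ((α - (d:ℝ)) * ln) < Real.exp 0 :=
            Real.exp_lt_exp.2 (mul_neg_of_neg_of_pos (by linarith) hln0)
        _ = 1 := Real.exp_zero
    have hq0 : 0 ≤ q := (Real.exp_pos _).le
    have hDtend : Tendsto (fun m : ℕ => c1 * q ^ m) atTop (nhds 0) := by
      have h1 := tendsto_pow_atTop_nhds_zero_of_lt_one hq0 hq1
      simpa using h1.const_mul c1
    have hDev : ∀ᶠ m : ℕ in atTop, c1 * q ^ m < ε/2 :=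
      hDtend.eventually (gt_mem_nhds (by linarith : (0:ℝ) < ε/2))
    set rbnd : ℕ → ℝ := fun m => gg * Real.exp (-(m:ℝ)) with hrbnd
    have hrb0 : ∀ m : ℕ, 0 ≤ rbnd m := by
      intro m
      rw [hrbnd]
      exact mul_nonneg (by rw [hgg]; linarith) (Real.exp_pos _).le
    have hlow : Tendsto (fun m : ℕ => ENNReal.ofReal (1 - rbnd m)) atTop (nhds 1) := by
      have h1 : Tendsto (fun m : ℕ => rbnd m) atTop (nhds 0) := by
        rw [hrbnd]
        have h2 : Tendsto (fun m : ℕ => Real.exp (-(m:ℝ))) atTop (nhds 0) :=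
          Real.tendsto_exp_neg_atTop_nhds_zero.comp tendsto_natCast_atTop_atTop
        simpa using h2.const_mul gg
      have h3 : Tendsto (fun m : ℕ => 1 - rbnd m) atTop (nhds 1) := by
        simpa using tendsto_const_nhds.sub h1
      have h4 := (ENNReal.continuous_ofReal.tendsto 1).comp h3
      rwa [ENNReal.ofReal_one] at h4
    apply tendsto_of_tendsto_of_tendsto_of_le_of_le' hlow tendsto_const_nhds ?_
      (Filter.Eventually.of_forall fun m => prob_le_one)
    filter_upwards [eventually_ge_atTop 2, hDev] with n hn2 hDn
    have hn1 : 1 ≤ n := by omega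
    have hζ : 0 < ζ n := hζpos n hn1
    have hζi0 : 0 ≤ (ζ n)⁻¹ := inv_nonneg.2 hζ.le
    set Sn : Finset (HLat d L) := (hfin n).toFinset with hSn
    have hmemS : ∀ {y : HLat d L}, y ∈ Sn ↔ y ∈ Lambda d L n := by
      intro y
      rw [hSn, Set.Finite.mem_toFinset]
    have h0Sn : (0 : HLat d L) ∈ Sn := hmemS.2 PSub.zero_mem_Lambda
    -- the edge weight
    set pe : Sym2 (HLat d L) → ℝ := Sym2.lift ⟨fun x y =>
        1 - Real.exp (-(1 + -ε) * (ζ n)⁻¹ * ρ ((hnorm (x - y) : ℝ))), by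
        intro x y
        simp only
        rw [show y - x = -(x - y) from (neg_sub x y).symm, PSub.hnorm_neg]⟩ with hpe
    have hpe_mk : ∀ x y : HLat d L,
        pe s(x, y) = 1 - Real.exp (-(1 + -ε) * (ζ n)⁻¹ * ρ ((hnorm (x - y) : ℝ))) := by
      intro x y
      rw [hpe, Sym2.lift_mk]
    have hexp_le_one : ∀ w : HLat d L,
        Real.exp (-(1 + -ε) * (ζ n)⁻¹ * ρ ((hnorm w : ℝ))) ≤ 1 := by
      intro w
      have h1 : 0 ≤ (1 + -ε) * ((ζ n)⁻¹ * ρ ((hnorm w : ℝ))) :=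
        mul_nonneg (by linarith) (mul_nonneg hζi0 (hρnn _ (Nat.cast_nonneg (hnorm w))))
      calc Real.exp (-(1 + -ε) * (ζ n)⁻¹ * ρ ((hnorm w : ℝ)))
          ≤ Real.exp 0 := Real.exp_le_exp.2 (by
            rw [show -(1 + -ε) * (ζ n)⁻¹ * ρ ((hnorm w : ℝ))
                = -((1 + -ε) * ((ζ n)⁻¹ * ρ ((hnorm w : ℝ)))) by ring]
            exact neg_nonpos.2 h1)
        _ = 1 := Real.exp_zero
    have hp0 : ∀ e, 0 ≤ pe e := by
      intro e
      induction e using Sym2.ind with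
      | _ x y =>
        rw [hpe_mk]
        linarith [hexp_le_one (x - y)]
    have hp1 : ∀ e, pe e ≤ 1 := by
      intro e
      induction e using Sym2.ind with
      | _ x y =>
        rw [hpe_mk]
        linarith [Real.exp_pos (-(1 + -ε) * (ζ n)⁻¹ * ρ ((hnorm (x - y) : ℝ)))]
    -- consequences of the zeta equation
    have hzeta := hζeq n hn1
    rw [zetaEq] at hzeta
    set aa : ℕ → ℝ := fun i => (ζ n)⁻¹ * ρ ((L:ℝ) ^ i) with haa
    have haann : ∀ i : ℕ, 0 ≤ aa i := by
      intro i
      rw [haa]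
      exact mul_nonneg hζi0 (hρnn _ (by positivity))
    have hexpaa : ∀ i : ℕ, Real.exp (-aa i) ≤ 1 := by
      intro i
      rw [show (1:ℝ) = Real.exp 0 from Real.exp_zero.symm]
      exact Real.exp_le_exp.2 (by linarith [haann i])
    set cc : ℕ → ℝ := fun i => (L:ℝ) ^ (i*d) - (L:ℝ) ^ ((i-1)*d) with hcc
    have hccfac : ∀ i, 1 ≤ i → cc i = (L:ℝ) ^ ((i-1)*d) * ((L:ℝ)^d - 1) := by
      intro i hi
      rw [hcc]
      simp only
      rw [show i * d = (i-1)*d + d by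
        have h1 : i = (i - 1) + 1 := by omega
        calc i * d = ((i-1) + 1) * d := by rw [← h1]
          _ = (i-1)*d + d := by ring]
      rw [pow_add]
      ring
    have hLd2 : (2:ℝ) ≤ (L:ℝ)^d := by
      calc (2:ℝ) ≤ (L:ℝ) := by exact_mod_cast hL
        _ ≤ (L:ℝ)^d := le_self_pow₀ (by linarith) (by omega)
    have hccpos : ∀ i, 1 ≤ i → 0 < cc i := by
      intro i hi
      rw [hccfac i hi]
      exact PSub.pos_step (pow_pos hL0 ((i-1)*d)) hLd2
    have hzsum : ∑ i ∈ Finset.Icc 1 n, cc i * Real.exp (-aa i) = (L:ℝ)^(n*d) - 2 := by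
      rw [← hzeta, Finset.mul_sum]
      apply Finset.sum_congr rfl
      intro i hi
      rw [Finset.mem_Icc] at hi
      rw [hccfac i hi.1, haa]
      simp only
      rw [neg_mul]
      ring
    have hcsum : ∑ i ∈ Finset.Icc 1 n, cc i = (L:ℝ)^(n*d) - 1 := by
      rw [PSub.sum_Icc_one n cc]
      have hcongr : ∀ j ∈ Finset.range n, cc (j+1) = (L:ℝ)^((j+1)*d) - (L:ℝ)^(j*d) := by
        intro j _
        rw [hcc]
        simp
      rw [Finset.sum_congr rfl hcongr, Finset.sum_range_sub (fun j => (L:ℝ)^(j*d))]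
      norm_num
    have hshell1 : ∑ i ∈ Finset.Icc 1 n, cc i * (1 - Real.exp (-aa i)) = 1 := by
      have h1 : ∀ i ∈ Finset.Icc 1 n, cc i * (1 - Real.exp (-aa i))
          = cc i - cc i * Real.exp (-aa i) := fun i _ => by ring
      rw [Finset.sum_congr rfl h1, Finset.sum_sub_distrib, hcsum, hzsum]
      ring
    have hterm_nonneg : ∀ i ∈ Finset.Icc 1 n, 0 ≤ cc i * (1 - Real.exp (-aa i)) := by
      intro i hi
      rw [Finset.mem_Icc] at hi
      exact mul_nonneg (hccpos i hi.1).le (by linarith [hexpaa i])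
    have hsingle : cc n * (1 - Real.exp (-aa n)) ≤ 1 := by
      calc cc n * (1 - Real.exp (-aa n))
          ≤ ∑ i ∈ Finset.Icc 1 n, cc i * (1 - Real.exp (-aa i)) :=
            Finset.single_le_sum hterm_nonneg (Finset.mem_Icc.2 ⟨hn1, le_refl n⟩)
        _ = 1 := hshell1
    have hccn_ge : (L:ℝ)^((n-1)*d) ≤ cc n := by
      rw [hccfac n hn1]
      exact PSub.ge_step (pow_pos hL0 ((n-1)*d)) hLd2
    have hLnd2 : (2:ℝ) ≤ (L:ℝ)^((n-1)*d) := by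
      calc (2:ℝ) ≤ (L:ℝ) := by exact_mod_cast hL
        _ ≤ (L:ℝ)^((n-1)*d) :=
          le_self_pow₀ (by linarith) (Nat.mul_ne_zero (by omega) (by omega))
    have hLnd0 : (0:ℝ) < (L:ℝ)^((n-1)*d) := pow_pos hL0 _
    have h1exp : 1 - Real.exp (-aa n) ≤ ((L:ℝ)^((n-1)*d))⁻¹ := by
      have hcn0 : 0 < cc n := hccpos n hn1
      have h1e : 1 - Real.exp (-aa n) ≤ (cc n)⁻¹ := by
        rw [← one_div, le_div_iff₀ hcn0]
        linarith [hsingle,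
          (mul_comm (cc n) (1 - Real.exp (-aa n)) :
            cc n * (1 - Real.exp (-aa n)) = (1 - Real.exp (-aa n)) * cc n)]
      calc 1 - Real.exp (-aa n) ≤ (cc n)⁻¹ := h1e
        _ ≤ ((L:ℝ)^((n-1)*d))⁻¹ := inv_anti₀ hLnd0 hccn_ge
    have haan2 : aa n ≤ 2 * ((L:ℝ)^((n-1)*d))⁻¹ := by
      apply PSub.le_two_mul_of_one_sub_exp_le (haann n) h1exp
      calc ((L:ℝ)^((n-1)*d))⁻¹ ≤ 2⁻¹ := inv_anti₀ (by norm_num) hLnd2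
        _ = 1/2 := by norm_num
    have hLpow1 : ∀ k : ℕ, 1 ≤ k → (1:ℝ) ≤ (L:ℝ)^k := by
      intro k _
      calc (1:ℝ) = 1^k := (one_pow k).symm
        _ ≤ (L:ℝ)^k := pow_le_pow_left₀ (by norm_num) (by linarith) k
    have hζinv : (ζ n)⁻¹ ≤ 2 * ((L:ℝ)^((n-1)*d))⁻¹ * ((L:ℝ)^n : ℝ)^α / A1 := by
      have hXpos : (0:ℝ) < ((L:ℝ)^n : ℝ)^α := Real.rpow_pos_of_pos (pow_pos hL0 n) α
      have hρl := hρlb ((L:ℝ)^n) (hLpow1 n hn1)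
      have h1 : (ζ n)⁻¹ * (A1 * (((L:ℝ)^n : ℝ)^α)⁻¹) ≤ aa n := by
        rw [haa]
        simp only
        have := mul_le_mul_of_nonneg_left hρl hζi0
        rw [Real.rpow_neg (pow_pos hL0 n).le] at this
        linarith [this]
      have h4 : (ζ n)⁻¹ * (A1 * (((L:ℝ)^n : ℝ)^α)⁻¹) ≤ 2 * ((L:ℝ)^((n-1)*d))⁻¹ :=
        le_trans h1 haan2
      calc (ζ n)⁻¹
          = ((ζ n)⁻¹ * (A1 * (((L:ℝ)^n : ℝ)^α)⁻¹)) * (((L:ℝ)^n : ℝ)^α / A1) := by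
            field_simp
        _ ≤ (2 * ((L:ℝ)^((n-1)*d))⁻¹) * (((L:ℝ)^n : ℝ)^α / A1) := by
            apply mul_le_mul_of_nonneg_right h4 (by positivity)
        _ = 2 * ((L:ℝ)^((n-1)*d))⁻¹ * ((L:ℝ)^n : ℝ)^α / A1 := by ring
    have hauni : ∀ i, 1 ≤ i → i ≤ n → aa i ≤ c1 * q ^ n := by
      intro i hi1 hin
      have hbound : aa i ≤ (ζ n)⁻¹ * (A2 * (((L:ℝ)^i : ℝ) ^ (-α))) := by
        rw [haa]
        simp only
        exact mul_le_mul_of_nonneg_left (hρub _ (hLpow1 i hi1)) hζi0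
      have hXa : (ζ n)⁻¹ * (A2 * (((L:ℝ)^i : ℝ) ^ (-α)))
          ≤ (2 * ((L:ℝ)^((n-1)*d))⁻¹ * ((L:ℝ)^n : ℝ)^α / A1) * (A2 * (((L:ℝ)^i : ℝ) ^ (-α))) := by
        apply mul_le_mul_of_nonneg_right hζinv
        exact mul_nonneg hA20.le (Real.rpow_pos_of_pos (pow_pos hL0 i) (-α)).le
      have hexp_eq : (2 * ((L:ℝ)^((n-1)*d))⁻¹ * ((L:ℝ)^n : ℝ)^α / A1)
            * (A2 * (((L:ℝ)^i : ℝ) ^ (-α)))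
          = (2 * A2 / A1) * Real.exp (-(((((n-1)*d : ℕ)):ℝ) * ln) + α * (n * ln)
              + (-α) * (i * ln)) := by
        rw [hpowL ((n-1)*d), ← Real.exp_neg, hrpow n α, hrpow i (-α),
          Real.exp_add, Real.exp_add]
        ring
      have hexp_le : (2 * A2 / A1) * Real.exp (-(((((n-1)*d : ℕ)):ℝ) * ln) + α * (n * ln)
            + (-α) * (i * ln)) ≤ c1 * q ^ n := by
        rw [hc1, hq, ← Real.exp_nat_mul, mul_assoc, ← Real.exp_add]
        apply mul_le_mul_of_nonneg_left _ (div_nonneg (by linarith) hA1.le)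
        apply Real.exp_le_exp.2
        have hcast : ((((n-1)*d : ℕ)):ℝ) = ((n:ℝ) - 1) * (d:ℝ) := by
          rw [Nat.cast_mul, Nat.cast_sub (by omega : 1 ≤ n)]
          norm_num
        rw [hcast]
        have hi1' : (1:ℝ) ≤ (i:ℝ) := by exact_mod_cast hi1
        exact PSub.exponent_step hα0 hln0.le hi1'
      calc aa i ≤ _ := hbound
        _ ≤ _ := hXa
        _ = _ := hexp_eq
        _ ≤ c1 * q ^ n := hexp_le
    -- the degree bound
    have hμbound : ∀ x ∈ Sn, ∑ y ∈ Sn.erase x, pe s(x, y) ≤ mu := by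
      intro x hx
      have hstep1 : ∑ y ∈ Sn.erase x, pe s(x, y)
          = ∑ y ∈ Sn.erase 0, (1 - Real.exp (-(1 + -ε) * (ζ n)⁻¹ * ρ ((hnorm y : ℝ)))) := by
        have hsh := PSub.sum_erase_shift hL hfin n x (by rw [← hSn]; exact hx)
          (fun k => 1 - Real.exp (-(1 + -ε) * (ζ n)⁻¹ * ρ ((k : ℝ))))
        rw [hSn]
        rw [← hsh]
        apply Finset.sum_congr rfl
        intro y _
        rw [hpe_mk]
      rw [hstep1, hSn, PSub.sum_over_shell hL hfin n
        (fun k => 1 - Real.exp (-(1 + -ε) * (ζ n)⁻¹ * ρ ((k : ℝ))))]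
      have hterm : ∀ i ∈ Finset.Icc 1 n,
          ((L:ℝ) ^ (i*d) - (L:ℝ) ^ ((i-1)*d))
              * (1 - Real.exp (-(1 + -ε) * (ζ n)⁻¹ * ρ (((L^i : ℕ) : ℝ))))
            ≤ cc i * ((1 - ε) * ((1 + c1 * q ^ n) * (1 - Real.exp (-(aa i))))) := by
        intro i hi
        rw [Finset.mem_Icc] at hi
        have hccs : ((L:ℝ) ^ (i*d) - (L:ℝ) ^ ((i-1)*d)) = cc i := by rw [hcc]
        have hcast2 : ((L ^ i : ℕ) : ℝ) = (L:ℝ)^i := by push_cast; ring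
        rw [hccs, hcast2]
        apply mul_le_mul_of_nonneg_left _ (hccpos i hi.1).le
        have harg : -(1 + -ε) * (ζ n)⁻¹ * ρ ((L:ℝ)^i) = -((1 - ε) * aa i) := by
          rw [haa]
          simp only
          ring
        rw [harg]
        calc 1 - Real.exp (-((1 - ε) * aa i))
            ≤ (1 - ε) * ((1 + aa i) * (1 - Real.exp (-(aa i)))) :=
              PSub.per_term_bound (by linarith) (by linarith) (haann i)
          _ ≤ (1 - ε) * ((1 + c1 * q ^ n) * (1 - Real.exp (-(aa i)))) := by
              apply mul_le_mul_of_nonneg_left _ (by linarith)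
              apply mul_le_mul_of_nonneg_right _ (by linarith [hexpaa i])
              linarith [hauni i hi.1 hi.2]
      calc ∑ i ∈ Finset.Icc 1 n, ((L:ℝ) ^ (i*d) - (L:ℝ) ^ ((i-1)*d))
              * (1 - Real.exp (-(1 + -ε) * (ζ n)⁻¹ * ρ (((L^i : ℕ) : ℝ))))
          ≤ ∑ i ∈ Finset.Icc 1 n,
              cc i * ((1 - ε) * ((1 + c1 * q ^ n) * (1 - Real.exp (-(aa i))))) :=
            Finset.sum_le_sum hterm
        _ = (1 - ε) * (1 + c1 * q ^ n)
              * ∑ i ∈ Finset.Icc 1 n, cc i * (1 - Real.exp (-(aa i))) := by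
            rw [Finset.mul_sum]
            apply Finset.sum_congr rfl
            intro i _
            ring
        _ = (1 - ε) * (1 + c1 * q ^ n) := by rw [hshell1, mul_one]
        _ ≤ mu := by
            rw [hmu]
            exact PSub.mu_step hε0 hε1 (mul_nonneg hc10 (pow_nonneg hq0 n)) hDn
    have hclaims := PSub.mgf_bound pe hp0 hp1 Sn mu zz gg hzz1 hgg1 hμbound hkey Sn
      (subset_refl _)
    have hclaim1 := hclaims.1
    -- probability estimates
    set Kn : ℝ := C * (n:ℝ) / ε^2 with hKn
    set TT : Ω → Finset (Sym2 (HLat d L)) :=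
      fun ω => (PSub.ES Sn).filter (fun s => F n (-ε) s ω = true) with hTT
    set Bad : Set Ω := ⋃ x ∈ Sn, {ω | Kn < ((PSub.clus Sn (TT ω) {x}).card : ℝ)} with hBad
    set atom : Finset (Sym2 (HLat d L)) → Set Ω := fun T0 =>
      ⋂ s ∈ PSub.ES Sn, (F n (-ε) s) ⁻¹' {if s ∈ T0 then true else false} with hatom
    have hatom_meas : ∀ T0, MeasurableSet (atom T0) := by
      intro T0
      rw [hatom]
      apply Finset.measurableSet_biInter
      intro s _
      exact hFmeas n (-ε) s (measurableSet_singleton _)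
    have hmem_atom : ∀ ω : Ω, ω ∈ atom (TT ω) := by
      intro ω
      rw [hatom]
      simp only [Set.mem_iInter, Set.mem_preimage, Set.mem_singleton_iff]
      intro s hs
      by_cases h : F n (-ε) s ω = true
      · have hmem : s ∈ TT ω := Finset.mem_filter.2 ⟨hs, h⟩
        rw [if_pos hmem, h]
      · have hmem : s ∉ TT ω := fun hc => h (Finset.mem_filter.1 hc).2
        rw [if_neg hmem]
        exact Bool.eq_false_iff.2 h
    have hTT_sub : ∀ ω : Ω, TT ω ⊆ PSub.ES Sn := by
      intro ω
      rw [hTT]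
      exact Finset.filter_subset _ _
    have hTT_atom : ∀ (ω : Ω) (T0 : Finset (Sym2 (HLat d L))), T0 ⊆ PSub.ES Sn →
        ω ∈ atom T0 → TT ω = T0 := by
      intro ω T0 hT0 hω
      rw [hatom] at hω
      simp only [Set.mem_iInter, Set.mem_preimage, Set.mem_singleton_iff] at hω
      ext s
      rw [hTT]
      simp only [Finset.mem_filter]
      constructor
      · rintro ⟨hs, hF⟩
        have h1 := hω s hs
        rw [hF] at h1
        by_contra hns
        rw [if_neg hns] at h1
        simp at h1
      · intro hsT0
        refine ⟨hT0 hsT0, ?_⟩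
        have h1 := hω s (hT0 hsT0)
        rw [if_pos hsT0] at h1
        exact h1
    have hatomP : ∀ T0 ∈ (PSub.ES Sn).powerset,
        P (atom T0) = ENNReal.ofReal (PSub.W pe (PSub.ES Sn) T0) := by
      intro T0 hT0
      rw [Finset.mem_powerset] at hT0
      rw [hatom]
      rw [(hFindep n (-ε)).meas_biInter
        (fun s _ => ⟨{if s ∈ T0 then true else false}, measurableSet_singleton _, rfl⟩)]
      have hmarg : ∀ s ∈ PSub.ES Sn, P ((F n (-ε) s) ⁻¹' {if s ∈ T0 then true else false})
          = ENNReal.ofReal (if s ∈ T0 then pe s else 1 - pe s) := by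
        intro s hs
        induction s using Sym2.ind with
        | _ x y =>
          have hxy : x ≠ y := (PSub.mem_ES.1 hs).2.2
          have htrue : P ((F n (-ε) s(x, y)) ⁻¹' {true}) = ENNReal.ofReal (pe s(x, y)) := by
            have hd2 := hFdist n hn1 (-ε) (by linarith) x y hxy
            rw [hpe_mk]
            exact hd2
          by_cases hmem : s(x, y) ∈ T0
          · rw [if_pos hmem, if_pos hmem]
            exact htrue
          · rw [if_neg hmem, if_neg hmem]
            have hcompl : (F n (-ε) s(x, y)) ⁻¹' {false}
                = ((F n (-ε) s(x, y)) ⁻¹' {true})ᶜ := by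
              ext ω
              simp [Bool.not_eq_true]
            rw [hcompl, measure_compl (hFmeas n (-ε) _ (measurableSet_singleton _))
              (measure_ne_top _ _), htrue, measure_univ]
            rw [← ENNReal.ofReal_one, ← ENNReal.ofReal_sub _ (hp0 s(x, y))]
      rw [Finset.prod_congr rfl hmarg,
        ← ENNReal.ofReal_prod_of_nonneg (fun s _ => by
          split
          · exact hp0 s
          · linarith [hp1 s])]
      congr 1
      rw [PSub.W_eq_prod pe _ _ hT0]
    have hBadx_eq : ∀ x, {ω : Ω | Kn < ((PSub.clus Sn (TT ω) {x}).card : ℝ)}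
        = ⋃ T0 ∈ (PSub.ES Sn).powerset.filter
            (fun T0 => Kn < ((PSub.clus Sn T0 {x}).card : ℝ)), atom T0 := by
      intro x
      ext ω
      simp only [Set.mem_setOf_eq, Set.mem_iUnion, exists_prop]
      constructor
      · intro h
        refine ⟨TT ω, ?_, hmem_atom ω⟩
        rw [Finset.mem_filter, Finset.mem_powerset]
        exact ⟨hTT_sub ω, h⟩
      · rintro ⟨T0, hT0, hωa⟩
        rw [Finset.mem_filter, Finset.mem_powerset] at hT0
        rw [hTT_atom ω T0 hT0.1 hωa]
        exact hT0.2
    have hBadxP : ∀ x ∈ Sn, P {ω : Ω | Kn < ((PSub.clus Sn (TT ω) {x}).card : ℝ)}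
        ≤ ENNReal.ofReal (Real.exp (-(lam * Kn)) * gg) := by
      intro x hx
      rw [hBadx_eq x]
      refine le_trans (measure_biUnion_finset_le _ _) ?_
      have hsum1 : ∑ T0 ∈ (PSub.ES Sn).powerset.filter
            (fun T0 => Kn < ((PSub.clus Sn T0 {x}).card : ℝ)), P (atom T0)
          = ∑ T0 ∈ (PSub.ES Sn).powerset.filter
            (fun T0 => Kn < ((PSub.clus Sn T0 {x}).card : ℝ)),
              ENNReal.ofReal (PSub.W pe (PSub.ES Sn) T0) := by
        apply Finset.sum_congr rfl
        intro T0 hT0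
        exact hatomP T0 (Finset.mem_of_mem_filter T0 hT0)
      rw [hsum1, ← ENNReal.ofReal_sum_of_nonneg
        (fun T0 _ => PSub.W_nonneg hp0 hp1 _ T0)]
      apply ENNReal.ofReal_le_ofReal
      have hsum_eq : ∑ T0 ∈ (PSub.ES Sn).powerset.filter
            (fun T0 => Kn < ((PSub.clus Sn T0 {x}).card : ℝ)), PSub.W pe (PSub.ES Sn) T0
          = PSub.cube pe (PSub.ES Sn)
              (fun T => if Kn < ((PSub.clus Sn T {x}).card : ℝ) then 1 else 0) := by
        rw [PSub.cube, Finset.sum_filter]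
        apply Finset.sum_congr rfl
        intro T0 _
        split
        · rw [mul_one]
        · rw [mul_zero]
      rw [hsum_eq]
      calc PSub.cube pe (PSub.ES Sn)
            (fun T => if Kn < ((PSub.clus Sn T {x}).card : ℝ) then 1 else 0)
          ≤ PSub.cube pe (PSub.ES Sn)
            (fun T => Real.exp (-(lam * Kn)) * zz ^ (PSub.clus Sn T {x}).card) := by
            apply PSub.cube_mono hp0 hp1
            intro T _
            split
            case isTrue h =>
              have hz_card : zz ^ (PSub.clus Sn T {x}).card
                  = Real.exp (((PSub.clus Sn T {x}).card : ℝ) * lam) := by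
                rw [hzz, ← Real.exp_nat_mul]
              rw [hz_card, ← Real.exp_add, show (1:ℝ) = Real.exp 0 from Real.exp_zero.symm]
              apply Real.exp_le_exp.2
              exact PSub.markov_step hlam0 h
            case isFalse h =>
              positivity
        _ = Real.exp (-(lam * Kn))
            * PSub.cube pe (PSub.ES Sn) (fun T => zz ^ (PSub.clus Sn T {x}).card) :=
            PSub.cube_smul pe _ _ _
        _ ≤ Real.exp (-(lam * Kn)) * gg :=
            mul_le_mul_of_nonneg_left (hclaim1 x hx) (Real.exp_pos _).le
    have hBad_meas : MeasurableSet Bad := by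
      rw [hBad]
      apply Finset.measurableSet_biUnion
      intro x _
      rw [hBadx_eq x]
      apply Finset.measurableSet_biUnion
      intro T0 _
      exact hatom_meas T0
    have hcardSn : (Sn.card : ℝ) = Real.exp (((n*d : ℕ) : ℝ) * ln) := by
      rw [hSn, PSub.card_Lambda hL hfin n, ← hpowL (n*d)]
      push_cast
      ring
    have hlamKn : lam * Kn = (n:ℝ) * ((d:ℝ) * ln + 1) := by
      rw [hlam, hKn, hC, hln]
      field_simp
    have hBadP : P Bad ≤ ENNReal.ofReal (rbnd n) := by
      rw [hBad]
      refine le_trans (measure_biUnion_finset_le _ _) ?_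
      calc ∑ x ∈ Sn, P {ω : Ω | Kn < ((PSub.clus Sn (TT ω) {x}).card : ℝ)}
          ≤ ∑ _x ∈ Sn, ENNReal.ofReal (Real.exp (-(lam * Kn)) * gg) :=
            Finset.sum_le_sum hBadxP
        _ = Sn.card • ENNReal.ofReal (Real.exp (-(lam * Kn)) * gg) := Finset.sum_const _
        _ = ENNReal.ofReal ((Sn.card : ℝ) * (Real.exp (-(lam * Kn)) * gg)) := by
            rw [nsmul_eq_mul, ← ENNReal.ofReal_natCast Sn.card,
              ← ENNReal.ofReal_mul (Nat.cast_nonneg _)]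
        _ ≤ ENNReal.ofReal (rbnd n) := by
            apply ENNReal.ofReal_le_ofReal
            have heq : (Sn.card : ℝ) * (Real.exp (-(lam * Kn)) * gg)
                = gg * (Real.exp (((n*d : ℕ) : ℝ) * ln) * Real.exp (-(lam * Kn))) := by
              rw [hcardSn]
              ring
            rw [heq, ← Real.exp_add, hrbnd]
            apply le_of_eq
            congr 2
            rw [hlamKn]
            push_cast
            ring
    -- relating the bad event to the statement event
    have hcompl : Badᶜ ⊆ {ω : Ω | (((Sn.sup fun x =>
        compSize (graphOf (Lambda d L n) (fun s => F n (-ε) s ω)) x) : ℕ) : ℝ)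
          ≤ Kn} := by
      intro ω hω
      rw [hBad] at hω
      simp only [Set.mem_compl_iff, Set.mem_iUnion, exists_prop, not_exists, not_and,
        not_lt, Set.mem_setOf_eq] at hω
      rw [Set.mem_setOf_eq]
      have hcomp : ∀ x ∈ Sn, compSize (graphOf (Lambda d L n) (fun s => F n (-ε) s ω)) x
          = (PSub.clus Sn (TT ω) {x}).card := by
        intro x hx
        have hAdj : ∀ u v : HLat d L,
            (graphOf (Lambda d L n) (fun s => F n (-ε) s ω)).Adj u v
              ↔ PSub.R Sn (TT ω) u v := by
          intro u v
          show (u ≠ v ∧ u ∈ Lambda d L n ∧ v ∈ Lambda d L n ∧ F n (-ε) s(u, v) ω = true) ↔ _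
          rw [PSub.R]
          constructor
          · rintro ⟨h1, h2, h3, h4⟩
            refine ⟨h1, hmemS.2 h2, hmemS.2 h3, ?_⟩
            rw [hTT]
            exact Finset.mem_filter.2 ⟨PSub.mem_ES.2 ⟨hmemS.2 h2, hmemS.2 h3, h1⟩, h4⟩
          · rintro ⟨h1, h2, h3, h4⟩
            rw [hTT] at h4
            exact ⟨h1, hmemS.1 h2, hmemS.1 h3, (Finset.mem_filter.1 h4).2⟩
        have hreach : ∀ v, (graphOf (Lambda d L n) (fun s => F n (-ε) s ω)).Reachable x v
            ↔ PSub.reach Sn (TT ω) x v := by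
          intro v
          rw [SimpleGraph.reachable_iff_reflTransGen]
          constructor
          · exact Relation.ReflTransGen.mono (fun a b hab => (hAdj a b).1 hab) x v
          · exact Relation.ReflTransGen.mono (fun a b hab => (hAdj a b).2 hab) x v
        rw [compSize]
        have hset : {v | (graphOf (Lambda d L n) (fun s => F n (-ε) s ω)).Reachable x v}
            = ↑(PSub.clus Sn (TT ω) {x}) := by
          ext v
          rw [Set.mem_setOf_eq, Finset.mem_coe, PSub.mem_clus_singleton]
          constructor
          · intro h
            have hr := (hreach v).1 h
            exact ⟨PSub.reach_mem hr hx, hr⟩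
          · rintro ⟨hv, hr⟩
            exact (hreach v).2 hr
        rw [hset, Set.ncard_coe_finset]
      obtain ⟨x0, hx0, hsup⟩ := Finset.exists_mem_eq_sup Sn ⟨0, h0Sn⟩
        (fun x => compSize (graphOf (Lambda d L n) (fun s => F n (-ε) s ω)) x)
      rw [hsup, hcomp x0 hx0]
      exact hω x0 hx0
    calc ENNReal.ofReal (1 - rbnd n) = 1 - ENNReal.ofReal (rbnd n) := by
          rw [ENNReal.ofReal_sub 1 (hrb0 n), ENNReal.ofReal_one]
      _ ≤ 1 - P Bad := tsub_le_tsub_left hBadP 1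
      _ = P Badᶜ := (prob_compl_eq_one_sub hBad_meas).symm
      _ ≤ P _ := measure_mono hcompl


end
end

section
/- Define ζ̃_n = (L^d − 1)·∑_{i=1}^n L^{(i−1)d}·ρ(L^i). Then 0 ≤ ζ_n^{−1} − ζ̃_n^{−1} for all n ≥ 1, and there exist a constant C > 0 and a threshold n₀ ≥ 1, both depending only on A_1, A_2, L, d and α, such that for all n ≥ n₀: ζ_n^{−1} − ζ̃_n^{−1} ≤ C·L^{−n(2d−α)} if 0 < α < d/2; ζ_n^{−1} − ζ̃_n^{−1} ≤ C·n·L^{−3n(d−α)} if α = d/2; and ζ_n^{−1} − ζ̃_n^{−1} ≤ C·L^{−3n(d−α)} if d/2 < α < d. -/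
open MeasureTheory ProbabilityTheory Filter Finset
open scoped ENNReal Classical

noncomputable section

lemma exp_neg_le_quad {t : ℝ} (ht : 0 ≤ t) : Real.exp (-t) ≤ 1 - t + t^2/2 := by
  have h := Real.quadratic_le_exp_of_nonneg ht
  have h0 : (0:ℝ) < 1 + t + t^2/2 := by positivity
  have h1 : Real.exp (-t) * (1 + t + t^2/2) ≤ 1 := by
    rw [Real.exp_neg, inv_mul_le_iff₀ (Real.exp_pos t)]
    linarith
  nlinarith [Real.exp_pos (-t), sq_nonneg (t^2)]

lemma tele (L d : ℕ) (n : ℕ) :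
    ((L:ℝ)^d - 1) * ∑ i ∈ Finset.Icc 1 n, (L:ℝ)^((i-1)*d) = (L:ℝ)^(n*d) - 1 := by
  induction n with
  | zero => simp
  | succ n ih =>
    rw [Finset.sum_Icc_succ_top (by omega : 1 ≤ n + 1), mul_add, ih]
    have h1 : (n + 1 - 1) * d = n * d := by simp
    have h2 : (n + 1) * d = n * d + d := by ring
    rw [h1, h2, pow_add]
    ring

lemma conv1 (L d i : ℕ) (hi : 1 ≤ i) :
    ((L:ℝ))^((i-1)*d) = (L:ℝ) ^ ((((i:ℝ))-1) * (d:ℝ)) := by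
  rw [← Real.rpow_natCast (L:ℝ) ((i-1)*d)]
  congr 1
  push_cast [Nat.cast_sub hi]
  ring

lemma conv2 (L : ℕ) (i : ℕ) (α : ℝ) :
    (((L:ℝ))^i) ^ (-α) = (L:ℝ) ^ ((i:ℝ) * (-α)) := by
  rw [← Real.rpow_natCast (L:ℝ) i, ← Real.rpow_mul (by positivity)]


lemma zident (L d n : ℕ) (hL1 : 1 < (L:ℝ)) (hn : 1 ≤ n) (α A1 : ℝ) :
    A1 * ((L:ℝ)^d - 1) / (2 * (L:ℝ)^d) * (L:ℝ)^((n:ℝ)*((d:ℝ)-α))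
      = ((L:ℝ)^d - 1) * (L:ℝ)^((n-1)*d) * (A1 * ((L:ℝ)^n)^(-α)) / 2 := by
  have hL0 : (0:ℝ) < (L:ℝ) := by linarith
  rw [conv1 L d n hn, conv2 L n α]
  have e : (L:ℝ)^((n:ℝ)*((d:ℝ)-α))
      = (L:ℝ)^(((n:ℝ)-1)*(d:ℝ)) * (L:ℝ)^((n:ℝ)*(-α)) * (L:ℝ)^((d:ℝ)) := by
    rw [← Real.rpow_add hL0, ← Real.rpow_add hL0]
    congr 1
    ring
  rw [e, show (L:ℝ)^d = (L:ℝ)^((d:ℝ)) from (Real.rpow_natCast _ d).symm]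
  have hne : (L:ℝ)^((d:ℝ)) ≠ 0 := ne_of_gt (Real.rpow_pos_of_pos hL0 _)
  field_simp

lemma qterm (L d i : ℕ) (hL1 : 1 < (L:ℝ)) (hi : 1 ≤ i) (α A2 : ℝ) :
    (L:ℝ)^((i-1)*d) * (A2 * ((L:ℝ)^i)^(-α))^2
      = A2^2 / (L:ℝ)^d * ((L:ℝ)^((d:ℝ)-2*α))^i := by
  have hL0 : (0:ℝ) < (L:ℝ) := by linarith
  rw [conv1 L d i hi, conv2 L i α,
    ← Real.rpow_natCast ((L:ℝ)^((d:ℝ)-2*α)) i, ← Real.rpow_mul hL0.le,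
    show (L:ℝ)^d = (L:ℝ)^((d:ℝ)) from (Real.rpow_natCast _ d).symm]
  calc (L:ℝ)^(((i:ℝ)-1)*(d:ℝ)) * (A2 * (L:ℝ)^((i:ℝ)*(-α)))^2
      = A2^2 * ((L:ℝ)^((((i:ℝ)-1)*(d:ℝ)) + ((i:ℝ)*(-α) + (i:ℝ)*(-α)))) := by
        rw [Real.rpow_add hL0, Real.rpow_add hL0]; ring
    _ = A2^2 * (L:ℝ)^(((d:ℝ)-2*α)*(i:ℝ) - (d:ℝ)) := by
        rw [show (((i:ℝ)-1)*(d:ℝ)) + ((i:ℝ)*(-α) + (i:ℝ)*(-α))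
          = ((d:ℝ)-2*α)*(i:ℝ) - (d:ℝ) from by ring]
    _ = A2^2 / (L:ℝ)^((d:ℝ)) * (L:ℝ)^(((d:ℝ)-2*α)*(i:ℝ)) := by
        rw [Real.rpow_sub hL0]; ring

-- cube-inverse identity
lemma cubeinv (L : ℕ) (hL1 : 1 < (L:ℝ)) (n : ℕ) (β : ℝ) :
    (((L:ℝ)^((n:ℝ)*β))^3)⁻¹ = (L:ℝ)^(-(3*(n:ℝ))*β) := by
  have hL0 : (0:ℝ) < (L:ℝ) := by linarith
  rw [← Real.rpow_natCast ((L:ℝ)^((n:ℝ)*β)) 3, ← Real.rpow_mul hL0.le,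
    ← Real.rpow_neg hL0.le]
  congr 1
  push_cast
  ring

-- exponent merge in case r > 1
lemma merge1 (L : ℕ) (hL1 : 1 < (L:ℝ)) (n : ℕ) (d α : ℝ) :
    ((L:ℝ)^((d:ℝ)-2*α))^n * (L:ℝ)^(-(3*(n:ℝ))*((d:ℝ)-α))
      = (L:ℝ)^(-(n:ℝ)*(2*(d:ℝ)-α)) := by
  have hL0 : (0:ℝ) < (L:ℝ) := by linarith
  rw [← Real.rpow_natCast ((L:ℝ)^((d:ℝ)-2*α)) n, ← Real.rpow_mul hL0.le,
    ← Real.rpow_add hL0]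
  congr 1
  ring


set_option maxHeartbeats 2000000 in
theorem main_thm
    (d L : ℕ) (hd : 1 ≤ d) (hL : 2 ≤ L)
    (A1 A2 α : ℝ) (hA1 : 0 < A1) (hA12 : A1 ≤ A2)
    (hα0 : 0 < α) (hαd : α < (d : ℝ))
    (ρ : ℝ → ℝ) (hρ0 : ρ 0 = 0)
    (hρnn : ∀ r : ℝ, 0 ≤ r → 0 ≤ ρ r)
    (hρlb : ∀ r : ℝ, 1 ≤ r → A1 * r ^ (-α) ≤ ρ r)
    (hρub : ∀ r : ℝ, 1 ≤ r → ρ r ≤ A2 * r ^ (-α))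
    (ζ : ℕ → ℝ) (hζpos : ∀ n : ℕ, 1 ≤ n → 0 < ζ n)
    (hζeq : ∀ n : ℕ, 1 ≤ n → ((L : ℝ) ^ d - 1) *
      ∑ i ∈ Finset.Icc 1 n, (L : ℝ) ^ ((i - 1) * d) * Real.exp (-(ζ n)⁻¹ * ρ ((L : ℝ) ^ i))
    = (L : ℝ) ^ (n * d) - 2)
 :
    (∀ n : ℕ, 1 ≤ n →
      0 ≤ (ζ n)⁻¹ -
        (((L : ℝ) ^ d - 1) *
          ∑ i ∈ Finset.Icc 1 n, (L : ℝ) ^ ((i - 1) * d) * ρ ((L : ℝ) ^ i))⁻¹) ∧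
    ∃ C : ℝ, 0 < C ∧ ∃ n₀ : ℕ, 1 ≤ n₀ ∧ ∀ n : ℕ, n₀ ≤ n →
      (let diff : ℝ := (ζ n)⁻¹ -
        (((L : ℝ) ^ d - 1) *
          ∑ i ∈ Finset.Icc 1 n, (L : ℝ) ^ ((i - 1) * d) * ρ ((L : ℝ) ^ i))⁻¹;
      (α < (d : ℝ) / 2 → diff ≤ C * (L : ℝ) ^ (-(n : ℝ) * (2 * (d : ℝ) - α))) ∧
      (α = (d : ℝ) / 2 → diff ≤ C * (n : ℝ) * (L : ℝ) ^ (-(3 * (n : ℝ)) * ((d : ℝ) - α))) ∧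
      ((d : ℝ) / 2 < α → diff ≤ C * (L : ℝ) ^ (-(3 * (n : ℝ)) * ((d : ℝ) - α)))) := by
  -- basic facts
  have hL1 : (1:ℝ) < (L:ℝ) := by exact_mod_cast (by omega : 1 < L)
  have hL0 : (0:ℝ) < (L:ℝ) := by linarith
  have hLd2 : (2:ℝ) ≤ (L:ℝ)^d := by
    calc (2:ℝ) ≤ (L:ℝ) := by exact_mod_cast hL
    _ = (L:ℝ)^1 := (pow_one _).symm
    _ ≤ (L:ℝ)^d := pow_le_pow_right₀ (le_of_lt hL1) hd
  have hM1 : 1 ≤ (L:ℝ)^d - 1 := by linarith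
  have hM0 : (0:ℝ) < (L:ℝ)^d - 1 := by linarith
  have hpowi : ∀ i : ℕ, (1:ℝ) ≤ (L:ℝ)^i := fun i => one_le_pow₀ (le_of_lt hL1)
  have hρpos : ∀ i : ℕ, 0 < ρ ((L:ℝ)^i) := by
    intro i
    have := hρlb ((L:ℝ)^i) (hpowi i)
    have h2 : (0:ℝ) < A1 * ((L:ℝ)^i)^(-α) := by positivity
    linarith
  -- the key rewritten equation
  have hkey : ∀ n : ℕ, 1 ≤ n → ((L:ℝ)^d - 1) * ∑ i ∈ Finset.Icc 1 n,
      (L:ℝ)^((i-1)*d) * (1 - Real.exp (-(ζ n)⁻¹ * ρ ((L:ℝ)^i))) = 1 := by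
    intro n hn
    have h1 := tele L d n
    have h2 := hζeq n hn
    have h3 : ∑ i ∈ Finset.Icc 1 n, (L:ℝ)^((i-1)*d) * (1 - Real.exp (-(ζ n)⁻¹ * ρ ((L:ℝ)^i)))
        = (∑ i ∈ Finset.Icc 1 n, (L:ℝ)^((i-1)*d))
          - ∑ i ∈ Finset.Icc 1 n, (L:ℝ)^((i-1)*d) * Real.exp (-(ζ n)⁻¹ * ρ ((L:ℝ)^i)) := by
      rw [← Finset.sum_sub_distrib]
      exact Finset.sum_congr rfl fun i _ => by ring
    rw [h3, mul_sub, h1, h2]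
    ring
  -- ζ n ≤ ζt n
  have hle : ∀ n : ℕ, 1 ≤ n → ζ n ≤ ((L:ℝ)^d - 1) *
      ∑ i ∈ Finset.Icc 1 n, (L:ℝ)^((i-1)*d) * ρ ((L:ℝ)^i) := by
    intro n hn
    have hζ := hζpos n hn
    have hstep : ∑ i ∈ Finset.Icc 1 n, (L:ℝ)^((i-1)*d) * (1 - Real.exp (-(ζ n)⁻¹ * ρ ((L:ℝ)^i)))
        ≤ (ζ n)⁻¹ * ∑ i ∈ Finset.Icc 1 n, (L:ℝ)^((i-1)*d) * ρ ((L:ℝ)^i) := by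
      rw [Finset.mul_sum]
      refine Finset.sum_le_sum fun i _ => ?_
      have h1 : 1 - ((ζ n)⁻¹ * ρ ((L:ℝ)^i)) ≤ Real.exp (-((ζ n)⁻¹ * ρ ((L:ℝ)^i))) :=
        Real.one_sub_le_exp_neg _
      have h2 : (0:ℝ) ≤ (L:ℝ)^((i-1)*d) := by positivity
      calc (L:ℝ)^((i-1)*d) * (1 - Real.exp (-(ζ n)⁻¹ * ρ ((L:ℝ)^i)))
          ≤ (L:ℝ)^((i-1)*d) * ((ζ n)⁻¹ * ρ ((L:ℝ)^i)) := by
            apply mul_le_mul_of_nonneg_left _ h2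
            rw [show -(ζ n)⁻¹ * ρ ((L:ℝ)^i) = -((ζ n)⁻¹ * ρ ((L:ℝ)^i)) from by ring]
            linarith
        _ = (ζ n)⁻¹ * ((L:ℝ)^((i-1)*d) * ρ ((L:ℝ)^i)) := by ring
    have h4 := hkey n hn
    have h5 : 1 ≤ ((L:ℝ)^d - 1) * ((ζ n)⁻¹ * ∑ i ∈ Finset.Icc 1 n,
        (L:ℝ)^((i-1)*d) * ρ ((L:ℝ)^i)) := by
      calc (1:ℝ) = ((L:ℝ)^d - 1) * ∑ i ∈ Finset.Icc 1 n,
            (L:ℝ)^((i-1)*d) * (1 - Real.exp (-(ζ n)⁻¹ * ρ ((L:ℝ)^i))) := (hkey n hn).symm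
        _ ≤ _ := mul_le_mul_of_nonneg_left hstep (le_of_lt hM0)
    have h6 := mul_le_mul_of_nonneg_left h5 (le_of_lt hζ)
    have h7 : ζ n * (((L:ℝ)^d - 1) * ((ζ n)⁻¹ * ∑ i ∈ Finset.Icc 1 n,
        (L:ℝ)^((i-1)*d) * ρ ((L:ℝ)^i)))
        = ((L:ℝ)^d - 1) * ∑ i ∈ Finset.Icc 1 n, (L:ℝ)^((i-1)*d) * ρ ((L:ℝ)^i) := by
      field_simp
    rw [h7] at h6
    linarith
  -- positivity of ζt
  have hZpos : ∀ n : ℕ, 1 ≤ n → 0 < ((L:ℝ)^d - 1) *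
      ∑ i ∈ Finset.Icc 1 n, (L:ℝ)^((i-1)*d) * ρ ((L:ℝ)^i) :=
    fun n hn => lt_of_lt_of_le (hζpos n hn) (hle n hn)
  constructor
  · -- part 1
    intro n hn
    have h1 : (((L:ℝ)^d - 1) * ∑ i ∈ Finset.Icc 1 n,
        (L:ℝ)^((i-1)*d) * ρ ((L:ℝ)^i))⁻¹ ≤ (ζ n)⁻¹ :=
      inv_anti₀ (hζpos n hn) (hle n hn)
    linarith
  · -- PART 2
    have hζlb : ∀ n : ℕ, 2 ≤ n →
        A1 * ((L:ℝ)^d - 1) / (2 * (L:ℝ)^d) * (L:ℝ)^((n:ℝ)*((d:ℝ)-α)) ≤ ζ n := by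
      intro n hn2
      have hn1 : 1 ≤ n := by omega
      have hζ := hζpos n hn1
      have hEle1 : ∀ i : ℕ, Real.exp (-(ζ n)⁻¹ * ρ ((L:ℝ)^i)) ≤ 1 := by
        intro i
        apply Real.exp_le_one_iff.mpr
        have : (0:ℝ) ≤ (ζ n)⁻¹ * ρ ((L:ℝ)^i) :=
          mul_nonneg (inv_nonneg.mpr hζ.le) (hρpos i).le
        nlinarith
      have hterm : ∀ i ∈ Finset.Icc 1 n,
          (0:ℝ) ≤ (L:ℝ)^((i-1)*d) * (1 - Real.exp (-(ζ n)⁻¹ * ρ ((L:ℝ)^i))) := by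
        intro i _
        exact mul_nonneg (by positivity) (by linarith [hEle1 i])
      have hsingle : (L:ℝ)^((n-1)*d) * (1 - Real.exp (-(ζ n)⁻¹ * ρ ((L:ℝ)^n)))
          ≤ ∑ i ∈ Finset.Icc 1 n,
            (L:ℝ)^((i-1)*d) * (1 - Real.exp (-(ζ n)⁻¹ * ρ ((L:ℝ)^i))) :=
        Finset.single_le_sum hterm (Finset.mem_Icc.mpr ⟨hn1, le_refl n⟩)
      have hMP1 : ((L:ℝ)^d - 1) * ((L:ℝ)^((n-1)*d)
          * (1 - Real.exp (-(ζ n)⁻¹ * ρ ((L:ℝ)^n)))) ≤ 1 := by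
        calc ((L:ℝ)^d - 1) * ((L:ℝ)^((n-1)*d)
            * (1 - Real.exp (-(ζ n)⁻¹ * ρ ((L:ℝ)^n))))
            ≤ ((L:ℝ)^d - 1) * ∑ i ∈ Finset.Icc 1 n,
              (L:ℝ)^((i-1)*d) * (1 - Real.exp (-(ζ n)⁻¹ * ρ ((L:ℝ)^i))) :=
              mul_le_mul_of_nonneg_left hsingle hM0.le
          _ = 1 := hkey n hn1
      have hPd : (L:ℝ)^d ≤ (L:ℝ)^((n-1)*d) :=
        pow_le_pow_right₀ hL1.le (Nat.le_mul_of_pos_left d (by omega))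
      have hMP2 : (2:ℝ) ≤ ((L:ℝ)^d - 1) * (L:ℝ)^((n-1)*d) := by nlinarith
      have hE0 : (0:ℝ) ≤ 1 - Real.exp (-(ζ n)⁻¹ * ρ ((L:ℝ)^n)) := by linarith [hEle1 n]
      have hE2 : 1 - Real.exp (-(ζ n)⁻¹ * ρ ((L:ℝ)^n)) ≤ 1/2 := by nlinarith
      have hneg : -(ζ n)⁻¹ * ρ ((L:ℝ)^n) = -((ζ n)⁻¹ * ρ ((L:ℝ)^n)) := by ring
      have htnn : (0:ℝ) ≤ (ζ n)⁻¹ * ρ ((L:ℝ)^n) :=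
        mul_nonneg (inv_nonneg.mpr hζ.le) (hρpos n).le
      have ht1 : (ζ n)⁻¹ * ρ ((L:ℝ)^n) ≤ 1 := by
        by_contra hc
        push_neg at hc
        have he1 : Real.exp (-((ζ n)⁻¹ * ρ ((L:ℝ)^n))) < Real.exp (-1) :=
          Real.exp_lt_exp.mpr (by linarith)
        have he2 : Real.exp (-1 : ℝ) < 1/2 := by
          rw [Real.exp_neg]
          have h2e : (2:ℝ) < Real.exp 1 := lt_trans (by norm_num) Real.exp_one_gt_d9
          have h3 : (Real.exp 1)⁻¹ < 2⁻¹ := by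
            apply inv_strictAnti₀ (by norm_num) h2e
          linarith [h3]
        rw [hneg] at hE2
        linarith
      have hquad := exp_neg_le_quad htnn
      have hhalf : (ζ n)⁻¹ * ρ ((L:ℝ)^n) / 2
          ≤ 1 - Real.exp (-((ζ n)⁻¹ * ρ ((L:ℝ)^n))) := by nlinarith
      have h8 : ((L:ℝ)^d - 1) * (L:ℝ)^((n-1)*d) * ((ζ n)⁻¹ * ρ ((L:ℝ)^n) / 2) ≤ 1 := by
        rw [hneg] at hMP1
        nlinarith [hMP2, hhalf, hMP1]
      have h10 : ((L:ℝ)^d - 1) * (L:ℝ)^((n-1)*d) * ρ ((L:ℝ)^n) / 2 ≤ ζ n := by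
        have h11 := mul_le_mul_of_nonneg_right h8 hζ.le
        have h12 : ((L:ℝ)^d - 1) * (L:ℝ)^((n-1)*d) * ((ζ n)⁻¹ * ρ ((L:ℝ)^n) / 2) * ζ n
            = ((L:ℝ)^d - 1) * (L:ℝ)^((n-1)*d) * ρ ((L:ℝ)^n) / 2 := by
          field_simp
        rw [h12] at h11
        linarith
      have hρlbn := hρlb ((L:ℝ)^n) (hpowi n)
      calc A1 * ((L:ℝ)^d - 1) / (2 * (L:ℝ)^d) * (L:ℝ)^((n:ℝ)*((d:ℝ)-α))
          = ((L:ℝ)^d - 1) * (L:ℝ)^((n-1)*d) * (A1 * ((L:ℝ)^n)^(-α)) / 2 :=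
            zident L d n hL1 hn1 α A1
        _ ≤ ((L:ℝ)^d - 1) * (L:ℝ)^((n-1)*d) * ρ ((L:ℝ)^n) / 2 := by
            have hMPnn : (0:ℝ) ≤ ((L:ℝ)^d - 1) * (L:ℝ)^((n-1)*d) := by positivity
            have := mul_le_mul_of_nonneg_left hρlbn hMPnn
            linarith
        _ ≤ ζ n := h10
    have hZlb : ∀ n : ℕ, 2 ≤ n →
        A1 * ((L:ℝ)^d - 1) / (2 * (L:ℝ)^d) * (L:ℝ)^((n:ℝ)*((d:ℝ)-α))
          ≤ ((L:ℝ)^d - 1) * ∑ i ∈ Finset.Icc 1 n, (L:ℝ)^((i-1)*d) * ρ ((L:ℝ)^i) :=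
      fun n hn => le_trans (hζlb n hn) (hle n (by omega))
    have hQle : ∀ n : ℕ,
        ((L:ℝ)^d - 1) * ∑ i ∈ Finset.Icc 1 n, (L:ℝ)^((i-1)*d) * (ρ ((L:ℝ)^i))^2
        ≤ (((L:ℝ)^d - 1) * A2^2 / (L:ℝ)^d)
          * ∑ i ∈ Finset.Icc 1 n, ((L:ℝ)^((d:ℝ)-2*α))^i := by
      intro n
      rw [Finset.mul_sum, Finset.mul_sum]
      refine Finset.sum_le_sum fun i hi => ?_
      have hi1 : 1 ≤ i := (Finset.mem_Icc.mp hi).1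
      have hub := hρub ((L:ℝ)^i) (hpowi i)
      have hρn := (hρpos i).le
      have hsq : (ρ ((L:ℝ)^i))^2 ≤ (A2 * ((L:ℝ)^i)^(-α))^2 := pow_le_pow_left₀ hρn hub 2
      calc ((L:ℝ)^d - 1) * ((L:ℝ)^((i-1)*d) * (ρ ((L:ℝ)^i))^2)
          ≤ ((L:ℝ)^d - 1) * ((L:ℝ)^((i-1)*d) * (A2 * ((L:ℝ)^i)^(-α))^2) := by
            apply mul_le_mul_of_nonneg_left _ hM0.le
            exact mul_le_mul_of_nonneg_left hsq (by positivity)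
        _ = ((L:ℝ)^d - 1) * A2^2 / (L:ℝ)^d * ((L:ℝ)^((d:ℝ)-2*α))^i := by
            rw [qterm L d i hL1 hi1 α A2]; ring
    have hmaster : ∀ n : ℕ, 1 ≤ n →
        (ζ n)⁻¹ - (((L:ℝ)^d - 1) * ∑ i ∈ Finset.Icc 1 n, (L:ℝ)^((i-1)*d) * ρ ((L:ℝ)^i))⁻¹
        ≤ (((L:ℝ)^d - 1) * ∑ i ∈ Finset.Icc 1 n, (L:ℝ)^((i-1)*d) * (ρ ((L:ℝ)^i))^2)
          / (2 * (ζ n)^2 * (((L:ℝ)^d - 1)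
              * ∑ i ∈ Finset.Icc 1 n, (L:ℝ)^((i-1)*d) * ρ ((L:ℝ)^i))) := by
      intro n hn
      have hζ := hζpos n hn
      have hZ := hZpos n hn
      have hlow : ∀ i ∈ Finset.Icc 1 n,
          (L:ℝ)^((i-1)*d) * ((ζ n)⁻¹ * ρ ((L:ℝ)^i) - ((ζ n)⁻¹ * ρ ((L:ℝ)^i))^2/2)
            ≤ (L:ℝ)^((i-1)*d) * (1 - Real.exp (-(ζ n)⁻¹ * ρ ((L:ℝ)^i))) := by
        intro i _
        apply mul_le_mul_of_nonneg_left _ (by positivity)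
        have htnn : (0:ℝ) ≤ (ζ n)⁻¹ * ρ ((L:ℝ)^i) :=
          mul_nonneg (inv_nonneg.mpr hζ.le) (hρpos i).le
        have hq := exp_neg_le_quad htnn
        rw [show -(ζ n)⁻¹ * ρ ((L:ℝ)^i) = -((ζ n)⁻¹ * ρ ((L:ℝ)^i)) from by ring]
        nlinarith
      have hsum := Finset.sum_le_sum hlow
      have hquad : (ζ n)⁻¹ * (((L:ℝ)^d - 1)
            * ∑ i ∈ Finset.Icc 1 n, (L:ℝ)^((i-1)*d) * ρ ((L:ℝ)^i))
          - ((ζ n)⁻¹)^2/2 * (((L:ℝ)^d - 1)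
            * ∑ i ∈ Finset.Icc 1 n, (L:ℝ)^((i-1)*d) * (ρ ((L:ℝ)^i))^2)
          ≤ 1 := by
        have e : (ζ n)⁻¹ * (((L:ℝ)^d - 1)
              * ∑ i ∈ Finset.Icc 1 n, (L:ℝ)^((i-1)*d) * ρ ((L:ℝ)^i))
            - ((ζ n)⁻¹)^2/2 * (((L:ℝ)^d - 1)
              * ∑ i ∈ Finset.Icc 1 n, (L:ℝ)^((i-1)*d) * (ρ ((L:ℝ)^i))^2)
            = ((L:ℝ)^d - 1) * ∑ i ∈ Finset.Icc 1 n,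
              (L:ℝ)^((i-1)*d) * ((ζ n)⁻¹ * ρ ((L:ℝ)^i) - ((ζ n)⁻¹ * ρ ((L:ℝ)^i))^2/2) := by
          simp only [Finset.mul_sum, ← Finset.sum_sub_distrib]
          exact Finset.sum_congr rfl fun i _ => by ring
        rw [e]
        calc ((L:ℝ)^d - 1) * ∑ i ∈ Finset.Icc 1 n,
              (L:ℝ)^((i-1)*d) * ((ζ n)⁻¹ * ρ ((L:ℝ)^i) - ((ζ n)⁻¹ * ρ ((L:ℝ)^i))^2/2)
            ≤ ((L:ℝ)^d - 1) * ∑ i ∈ Finset.Icc 1 n,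
              (L:ℝ)^((i-1)*d) * (1 - Real.exp (-(ζ n)⁻¹ * ρ ((L:ℝ)^i))) :=
              mul_le_mul_of_nonneg_left hsum hM0.le
          _ = 1 := hkey n hn
      set Z := ((L:ℝ)^d - 1) * ∑ i ∈ Finset.Icc 1 n, (L:ℝ)^((i-1)*d) * ρ ((L:ℝ)^i) with hZdef
      set Q := ((L:ℝ)^d - 1) * ∑ i ∈ Finset.Icc 1 n, (L:ℝ)^((i-1)*d) * (ρ ((L:ℝ)^i))^2
        with hQdef
      have hkey2 : ζ n * Z - Q/2 ≤ (ζ n)^2 := by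
        have h13 := mul_le_mul_of_nonneg_left hquad (sq_nonneg (ζ n))
        have h14 : (ζ n)^2 * ((ζ n)⁻¹ * Z - ((ζ n)⁻¹)^2/2 * Q) = ζ n * Z - Q/2 := by
          field_simp
        rw [h14] at h13
        nlinarith [h13]
      have hform : (ζ n)⁻¹ - Z⁻¹ = (Z - ζ n)/(ζ n * Z) := by
        field_simp
      rw [hform, div_le_div_iff₀ (by positivity) (by positivity)]
      nlinarith [mul_le_mul_of_nonneg_right hkey2
        (show (0:ℝ) ≤ 2*Z from by positivity), hζ, hZ,
        mul_pos hζ hZ]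
    -- abbreviations
    set a := A1 * ((L:ℝ)^d - 1) / (2 * (L:ℝ)^d) with hadef
    have ha : 0 < a := by
      rw [hadef]; exact div_pos (mul_pos hA1 hM0) (by positivity)
    set K := ((L:ℝ)^d - 1) * A2^2 / (L:ℝ)^d with hKdef
    have hA2 : 0 < A2 := lt_of_lt_of_le hA1 hA12
    have hK : 0 < K := by
      rw [hKdef]; exact div_pos (mul_pos hM0 (by positivity)) (by positivity)
    have hfinal : ∀ n : ℕ, 2 ≤ n →
        (ζ n)⁻¹ - (((L:ℝ)^d - 1) * ∑ i ∈ Finset.Icc 1 n, (L:ℝ)^((i-1)*d) * ρ ((L:ℝ)^i))⁻¹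
        ≤ K / (2*a^3) * (∑ i ∈ Finset.Icc 1 n, ((L:ℝ)^((d:ℝ)-2*α))^i)
            * (L:ℝ)^(-(3*(n:ℝ))*((d:ℝ)-α)) := by
      intro n hn2
      have hn1 : 1 ≤ n := by omega
      have hζ := hζpos n hn1
      have hZ := hZpos n hn1
      have hb : (0:ℝ) < (L:ℝ)^((n:ℝ)*((d:ℝ)-α)) := Real.rpow_pos_of_pos hL0 _
      have hG0 : (0:ℝ) ≤ ∑ i ∈ Finset.Icc 1 n, ((L:ℝ)^((d:ℝ)-2*α))^i :=
        Finset.sum_nonneg fun i _ => pow_nonneg (Real.rpow_pos_of_pos hL0 _).le i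
      have hden : 2*a^3*((L:ℝ)^((n:ℝ)*((d:ℝ)-α)))^3
          ≤ 2 * (ζ n)^2 * (((L:ℝ)^d - 1)
              * ∑ i ∈ Finset.Icc 1 n, (L:ℝ)^((i-1)*d) * ρ ((L:ℝ)^i)) := by
        have h1 := hζlb n hn2
        have h2 := hZlb n hn2
        have h3 : (a*((L:ℝ)^((n:ℝ)*((d:ℝ)-α))))^2 ≤ (ζ n)^2 :=
          pow_le_pow_left₀ (by positivity) h1 2
        nlinarith [mul_le_mul h3 h2 (by positivity) (sq_nonneg (ζ n))]
      calc (ζ n)⁻¹ - (((L:ℝ)^d - 1)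
            * ∑ i ∈ Finset.Icc 1 n, (L:ℝ)^((i-1)*d) * ρ ((L:ℝ)^i))⁻¹
          ≤ _ := hmaster n hn1
        _ ≤ (K * ∑ i ∈ Finset.Icc 1 n, ((L:ℝ)^((d:ℝ)-2*α))^i)
            / (2*a^3*((L:ℝ)^((n:ℝ)*((d:ℝ)-α)))^3) :=
          div_le_div₀ (mul_nonneg hK.le hG0) (hQle n)
            (by positivity) hden
        _ = K / (2*a^3) * (∑ i ∈ Finset.Icc 1 n, ((L:ℝ)^((d:ℝ)-2*α))^i)
            * (L:ℝ)^(-(3*(n:ℝ))*((d:ℝ)-α)) := by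
          rw [← cubeinv L hL1 n ((d:ℝ)-α)]
          field_simp
    have hT0 : ∀ n : ℕ, (0:ℝ) ≤ (L:ℝ)^(-(3*(n:ℝ))*((d:ℝ)-α)) :=
      fun n => (Real.rpow_pos_of_pos hL0 _).le
    rcases lt_trichotomy α ((d:ℝ)/2) with hcase | hcase | hcase
    · -- α < d/2 : r > 1
      have hr0 : (0:ℝ) < (L:ℝ)^((d:ℝ)-2*α) := Real.rpow_pos_of_pos hL0 _
      have hr1 : 1 < (L:ℝ)^((d:ℝ)-2*α) :=
        (Real.one_lt_rpow_iff_of_pos hL0).mpr (Or.inl ⟨hL1, by linarith⟩)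
      refine ⟨K/(2*a^3) * ((L:ℝ)^((d:ℝ)-2*α)/((L:ℝ)^((d:ℝ)-2*α)-1)), ?_, 2, one_le_two,
        fun n hn => ?_⟩
      · have : (0:ℝ) < (L:ℝ)^((d:ℝ)-2*α)/((L:ℝ)^((d:ℝ)-2*α)-1) :=
          div_pos hr0 (by linarith)
        positivity
      refine ⟨fun _ => ?_, fun h2 => absurd h2 (by linarith), fun h3 => absurd h3 (by linarith)⟩
      have hGle : ∑ i ∈ Finset.Icc 1 n, ((L:ℝ)^((d:ℝ)-2*α))^i
          ≤ (L:ℝ)^((d:ℝ)-2*α)/((L:ℝ)^((d:ℝ)-2*α)-1) * ((L:ℝ)^((d:ℝ)-2*α))^n := by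
        have hsub : Finset.Icc 1 n ⊆ Finset.range (n+1) := by
          intro x hx
          have := (Finset.mem_Icc.mp hx).2
          simp only [Finset.mem_range]
          omega
        have h1 : ∑ i ∈ Finset.Icc 1 n, ((L:ℝ)^((d:ℝ)-2*α))^i
            ≤ ∑ i ∈ Finset.range (n+1), ((L:ℝ)^((d:ℝ)-2*α))^i :=
          Finset.sum_le_sum_of_subset_of_nonneg hsub
            (fun i _ _ => pow_nonneg hr0.le i)
        have h2 : ∑ i ∈ Finset.range (n+1), ((L:ℝ)^((d:ℝ)-2*α))^i
            = (((L:ℝ)^((d:ℝ)-2*α))^(n+1) - 1)/((L:ℝ)^((d:ℝ)-2*α)-1) :=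
          geom_sum_eq (ne_of_gt hr1) (n+1)
        have h3 : (((L:ℝ)^((d:ℝ)-2*α))^(n+1) - 1)/((L:ℝ)^((d:ℝ)-2*α)-1)
            ≤ (L:ℝ)^((d:ℝ)-2*α)/((L:ℝ)^((d:ℝ)-2*α)-1) * ((L:ℝ)^((d:ℝ)-2*α))^n := by
          rw [show (L:ℝ)^((d:ℝ)-2*α)/((L:ℝ)^((d:ℝ)-2*α)-1) * ((L:ℝ)^((d:ℝ)-2*α))^n
            = ((L:ℝ)^((d:ℝ)-2*α))^(n+1)/((L:ℝ)^((d:ℝ)-2*α)-1) from by rw [pow_succ]; ring]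
          exact (div_le_div_iff_of_pos_right (by linarith)).mpr (by linarith)
        linarith [h1, h2 ▸ h1, h3]
      show (ζ n)⁻¹ - (((L:ℝ)^d - 1)
            * ∑ i ∈ Finset.Icc 1 n, (L:ℝ)^((i-1)*d) * ρ ((L:ℝ)^i))⁻¹
          ≤ K/(2*a^3) * ((L:ℝ)^((d:ℝ)-2*α)/((L:ℝ)^((d:ℝ)-2*α)-1))
            * (L:ℝ)^(-(n:ℝ)*(2*(d:ℝ)-α))
      calc (ζ n)⁻¹ - (((L:ℝ)^d - 1)
            * ∑ i ∈ Finset.Icc 1 n, (L:ℝ)^((i-1)*d) * ρ ((L:ℝ)^i))⁻¹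
          ≤ K / (2*a^3) * (∑ i ∈ Finset.Icc 1 n, ((L:ℝ)^((d:ℝ)-2*α))^i)
            * (L:ℝ)^(-(3*(n:ℝ))*((d:ℝ)-α)) := hfinal n hn
        _ ≤ K / (2*a^3) * ((L:ℝ)^((d:ℝ)-2*α)/((L:ℝ)^((d:ℝ)-2*α)-1) * ((L:ℝ)^((d:ℝ)-2*α))^n)
            * (L:ℝ)^(-(3*(n:ℝ))*((d:ℝ)-α)) := by
          apply mul_le_mul_of_nonneg_right _ (hT0 n)
          exact mul_le_mul_of_nonneg_left hGle (by positivity)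
        _ = K/(2*a^3) * ((L:ℝ)^((d:ℝ)-2*α)/((L:ℝ)^((d:ℝ)-2*α)-1))
            * (((L:ℝ)^((d:ℝ)-2*α))^n * (L:ℝ)^(-(3*(n:ℝ))*((d:ℝ)-α))) := by ring
        _ = K/(2*a^3) * ((L:ℝ)^((d:ℝ)-2*α)/((L:ℝ)^((d:ℝ)-2*α)-1))
            * (L:ℝ)^(-(n:ℝ)*(2*(d:ℝ)-α)) := by rw [merge1 L hL1 n (d:ℝ) α]
    · -- α = d/2
      refine ⟨K/(2*a^3), by positivity, 2, one_le_two, fun n hn => ?_⟩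
      refine ⟨fun h1 => absurd h1 (by linarith), fun _ => ?_,
        fun h3 => absurd h3 (by linarith)⟩
      have hzero : (d:ℝ) - 2*α = 0 := by linarith
      have hGeq : ∑ i ∈ Finset.Icc 1 n, ((L:ℝ)^((d:ℝ)-2*α))^i = (n:ℝ) := by
        rw [hzero, Real.rpow_zero]
        simp
      show (ζ n)⁻¹ - (((L:ℝ)^d - 1)
            * ∑ i ∈ Finset.Icc 1 n, (L:ℝ)^((i-1)*d) * ρ ((L:ℝ)^i))⁻¹
          ≤ K/(2*a^3) * (n:ℝ) * (L:ℝ)^(-(3*(n:ℝ))*((d:ℝ)-α))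
      calc (ζ n)⁻¹ - (((L:ℝ)^d - 1)
            * ∑ i ∈ Finset.Icc 1 n, (L:ℝ)^((i-1)*d) * ρ ((L:ℝ)^i))⁻¹
          ≤ K / (2*a^3) * (∑ i ∈ Finset.Icc 1 n, ((L:ℝ)^((d:ℝ)-2*α))^i)
            * (L:ℝ)^(-(3*(n:ℝ))*((d:ℝ)-α)) := hfinal n hn
        _ = K/(2*a^3) * (n:ℝ) * (L:ℝ)^(-(3*(n:ℝ))*((d:ℝ)-α)) := by rw [hGeq]
    · -- α > d/2 : r < 1
      have hr0 : (0:ℝ) < (L:ℝ)^((d:ℝ)-2*α) := Real.rpow_pos_of_pos hL0 _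
      have hr1 : (L:ℝ)^((d:ℝ)-2*α) < 1 :=
        Real.rpow_lt_one_of_one_lt_of_neg hL1 (by linarith)
      refine ⟨K/(2*a^3) * (1/(1-(L:ℝ)^((d:ℝ)-2*α))), ?_, 2, one_le_two, fun n hn => ?_⟩
      · have : (0:ℝ) < 1/(1-(L:ℝ)^((d:ℝ)-2*α)) := by
          apply div_pos one_pos; linarith
        positivity
      refine ⟨fun h1 => absurd h1 (by linarith), fun h2 => absurd h2 (by linarith),
        fun _ => ?_⟩
      have hGle : ∑ i ∈ Finset.Icc 1 n, ((L:ℝ)^((d:ℝ)-2*α))^i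
          ≤ 1/(1-(L:ℝ)^((d:ℝ)-2*α)) := by
        have hsub : Finset.Icc 1 n ⊆ Finset.range (n+1) := by
          intro x hx
          have := (Finset.mem_Icc.mp hx).2
          simp only [Finset.mem_range]
          omega
        have h1 : ∑ i ∈ Finset.Icc 1 n, ((L:ℝ)^((d:ℝ)-2*α))^i
            ≤ ∑ i ∈ Finset.range (n+1), ((L:ℝ)^((d:ℝ)-2*α))^i :=
          Finset.sum_le_sum_of_subset_of_nonneg hsub
            (fun i _ _ => pow_nonneg hr0.le i)
        have h2 : ∑ i ∈ Finset.range (n+1), ((L:ℝ)^((d:ℝ)-2*α))^i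
            = (((L:ℝ)^((d:ℝ)-2*α))^(n+1) - 1)/((L:ℝ)^((d:ℝ)-2*α)-1) :=
          geom_sum_eq (ne_of_lt hr1) (n+1)
        have h4 : (0:ℝ) < ((L:ℝ)^((d:ℝ)-2*α))^(n+1) := pow_pos hr0 (n+1)
        have h5 : ((L:ℝ)^((d:ℝ)-2*α))^(n+1) ≤ 1 := pow_le_one₀ hr0.le hr1.le
        have h3 : (((L:ℝ)^((d:ℝ)-2*α))^(n+1) - 1)/((L:ℝ)^((d:ℝ)-2*α)-1)
            ≤ 1/(1-(L:ℝ)^((d:ℝ)-2*α)) := by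
          rw [show (((L:ℝ)^((d:ℝ)-2*α))^(n+1) - 1)/((L:ℝ)^((d:ℝ)-2*α)-1)
            = (1 - ((L:ℝ)^((d:ℝ)-2*α))^(n+1))/(1-(L:ℝ)^((d:ℝ)-2*α)) from by
              rw [← neg_div_neg_eq]; ring_nf]
          exact (div_le_div_iff_of_pos_right (by linarith)).mpr (by linarith)
        linarith [h1, h2 ▸ h1, h3]
      show (ζ n)⁻¹ - (((L:ℝ)^d - 1)
            * ∑ i ∈ Finset.Icc 1 n, (L:ℝ)^((i-1)*d) * ρ ((L:ℝ)^i))⁻¹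
          ≤ K/(2*a^3) * (1/(1-(L:ℝ)^((d:ℝ)-2*α))) * (L:ℝ)^(-(3*(n:ℝ))*((d:ℝ)-α))
      calc (ζ n)⁻¹ - (((L:ℝ)^d - 1)
            * ∑ i ∈ Finset.Icc 1 n, (L:ℝ)^((i-1)*d) * ρ ((L:ℝ)^i))⁻¹
          ≤ K / (2*a^3) * (∑ i ∈ Finset.Icc 1 n, ((L:ℝ)^((d:ℝ)-2*α))^i)
            * (L:ℝ)^(-(3*(n:ℝ))*((d:ℝ)-α)) := hfinal n hn
        _ ≤ K/(2*a^3) * (1/(1-(L:ℝ)^((d:ℝ)-2*α))) * (L:ℝ)^(-(3*(n:ℝ))*((d:ℝ)-α)) := by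
          apply mul_le_mul_of_nonneg_right _ (hT0 n)
          exact mul_le_mul_of_nonneg_left hGle (by positivity)




/-- With `ζ̃_n = (L^d - 1) ∑_{i=1}^n L^{(i-1)d} ρ(L^i)`, one has
`0 ≤ ζ_n⁻¹ - ζ̃_n⁻¹`, with the stated quantitative upper bounds. -/
theorem zeta_inv_minus_tilde_zeta_inv_bounds
    (d L : ℕ) (hd : 1 ≤ d) (hL : 2 ≤ L)
    (A1 A2 α : ℝ) (hA1 : 0 < A1) (hA12 : A1 ≤ A2)
    (hα0 : 0 < α) (hαd : α < (d : ℝ))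
    (ρ : ℝ → ℝ) (hρ0 : ρ 0 = 0)
    (hρnn : ∀ r : ℝ, 0 ≤ r → 0 ≤ ρ r)
    (hρlb : ∀ r : ℝ, 1 ≤ r → A1 * r ^ (-α) ≤ ρ r)
    (hρub : ∀ r : ℝ, 1 ≤ r → ρ r ≤ A2 * r ^ (-α))
    (ζ : ℕ → ℝ) (hζpos : ∀ n : ℕ, 1 ≤ n → 0 < ζ n)
    (hζeq : ∀ n : ℕ, 1 ≤ n → zetaEq d L ρ n (ζ n))
 :
    (∀ n : ℕ, 1 ≤ n →
      0 ≤ (ζ n)⁻¹ -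
        (((L : ℝ) ^ d - 1) *
          ∑ i ∈ Finset.Icc 1 n, (L : ℝ) ^ ((i - 1) * d) * ρ ((L : ℝ) ^ i))⁻¹) ∧
    ∃ C : ℝ, 0 < C ∧ ∃ n₀ : ℕ, 1 ≤ n₀ ∧ ∀ n : ℕ, n₀ ≤ n →
      (let diff : ℝ := (ζ n)⁻¹ -
        (((L : ℝ) ^ d - 1) *
          ∑ i ∈ Finset.Icc 1 n, (L : ℝ) ^ ((i - 1) * d) * ρ ((L : ℝ) ^ i))⁻¹;
      (α < (d : ℝ) / 2 → diff ≤ C * (L : ℝ) ^ (-(n : ℝ) * (2 * (d : ℝ) - α))) ∧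
      (α = (d : ℝ) / 2 → diff ≤ C * (n : ℝ) * (L : ℝ) ^ (-(3 * (n : ℝ)) * ((d : ℝ) - α))) ∧
      ((d : ℝ) / 2 < α → diff ≤ C * (L : ℝ) ^ (-(3 * (n : ℝ)) * ((d : ℝ) - α)))) := by
  exact main_thm d L hd hL A1 A2 α hA1 hA12 hα0 hαd ρ hρ0 hρnn hρlb hρub ζ hζpos (fun n hn => hζeq n hn)

end
end
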